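/- arXiv:1902.00196 — 3 statements merged into one kernel-verified Lean document; each statement's English description precedes it below -/
import Mathlib

section
/- Let F : CohI^{n+1} → CohI be a normal functor. Then the assignment on objects X⃗ ↦ Tr(F(X₁,…,Xₙ,−)) extends to a normal functor ∀(F) : CohI^n → CohI; that is, there exists a functor CohI^n → CohI preserving filtered colimits and finite pullbacks whose object map sends X⃗ to the trace of the normal functor F(X⃗,−) : CohI → CohI. -/
open CategoryTheory Limits

/-- A coherence space: a web together with a reflexive symmetric coherence relation. -/
structure CohSpace : Type 1 where
  web : Type
  coh : web → web → Prop
  refl : ∀ x, coh x x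
  symm : ∀ {x y}, coh x y → coh y x

/-- An embedding of coherence spaces: an injection preserving and reflecting coherence. -/
@[ext]
structure CohEmb (X Y : CohSpace) : Type where
  toFun : X.web → Y.web
  inj : Function.Injective toFun
  coh_iff : ∀ x x', X.coh x x' ↔ Y.coh (toFun x) (toFun x')

/-- The category `CohI` of coherence spaces and embeddings. -/
instance : Category CohSpace where
  Hom := CohEmb
  id X := ⟨id, fun _ _ h => h, fun _ _ => Iff.rfl⟩
  comp f g := ⟨g.toFun ∘ f.toFun, g.inj.comp f.inj,
    fun x x' => (f.coh_iff x x').trans (g.coh_iff _ _)⟩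
  id_comp _ := rfl
  comp_id _ := rfl
  assoc _ _ _ := rfl

/-- A clique: a set of pairwise coherent points. -/
def CohSpace.IsClique (X : CohSpace) (c : Set X.web) : Prop :=
  ∀ ⦃x⦄, x ∈ c → ∀ ⦃y⦄, y ∈ c → X.coh x y

/-- Linear negation (dual) of a coherence space. -/
def CohSpace.dual (X : CohSpace) : CohSpace where
  web := X.web
  coh x y := x = y ∨ ¬ X.coh x y
  refl _ := Or.inl rfl
  symm h := h.elim (fun h' => Or.inl h'.symm) (fun h' => Or.inr fun hc => h' (X.symm hc))

/-- Tensor product of coherence spaces. -/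
def CohSpace.tens (X Y : CohSpace) : CohSpace where
  web := X.web × Y.web
  coh p q := X.coh p.1 q.1 ∧ Y.coh p.2 q.2
  refl p := ⟨X.refl p.1, Y.refl p.2⟩
  symm h := ⟨X.symm h.1, Y.symm h.2⟩

/-- Direct sum (`⊕`) of coherence spaces. -/
def CohSpace.sum (X Y : CohSpace) : CohSpace where
  web := X.web ⊕ Y.web
  coh := Sum.LiftRel X.coh Y.coh
  refl x := by cases x with
    | inl a => exact Sum.LiftRel.inl (X.refl a)
    | inr b => exact Sum.LiftRel.inr (Y.refl b)
  symm h := by cases h with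
    | inl h => exact Sum.LiftRel.inl (X.symm h)
    | inr h => exact Sum.LiftRel.inr (Y.symm h)

/-- Linear implication `X ⊸ Y := (X ⊗ Y^⊥)^⊥`. -/
def CohSpace.lolly (X Y : CohSpace) : CohSpace := (X.tens Y.dual).dual

/-- The with connective `X & Y := (X^⊥ ⊕ Y^⊥)^⊥`. -/
def CohSpace.withc (X Y : CohSpace) : CohSpace := (X.dual.sum Y.dual).dual

/-- The one-point coherence space (interpretation of `1` and `⊥`). -/
def oneCoh : CohSpace where
  web := PUnit
  coh _ _ := True
  refl _ := trivial
  symm _ := trivial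

/-- The empty coherence space (interpretation of `0` and `⊤`). -/
def topCoh : CohSpace where
  web := Empty
  coh x _ := x.elim
  refl x := x.elim
  symm {x} _ := x.elim

/-- The induced embedding between duals. -/
def CohEmb.dualMap {X Y : CohSpace} (f : X ⟶ Y) : X.dual ⟶ Y.dual where
  toFun := f.toFun
  inj := f.inj
  coh_iff x x' := by
    constructor
    · rintro (rfl | h)
      · exact Or.inl rfl
      · exact Or.inr fun hc => h ((f.coh_iff _ _).2 hc)
    · rintro (h | h)
      · exact Or.inl (f.inj h)
      · exact Or.inr fun hc => h ((f.coh_iff _ _).1 hc)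

/-- The induced embedding between tensor products. -/
def CohEmb.tensMap {X X' Y Y' : CohSpace} (f : X ⟶ X') (g : Y ⟶ Y') :
    X.tens Y ⟶ X'.tens Y' where
  toFun := Prod.map f.toFun g.toFun
  inj := f.inj.prodMap g.inj
  coh_iff p q := and_congr (f.coh_iff _ _) (g.coh_iff _ _)

/-- The induced embedding between direct sums. -/
def CohEmb.sumMap {X X' Y Y' : CohSpace} (f : X ⟶ X') (g : Y ⟶ Y') :
    X.sum Y ⟶ X'.sum Y' where
  toFun := Sum.map f.toFun g.toFun
  inj := f.inj.sumMap g.inj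
  coh_iff x x' := by
    constructor
    · intro h
      cases h with
      | inl h => exact Sum.LiftRel.inl ((f.coh_iff _ _).1 h)
      | inr h => exact Sum.LiftRel.inr ((g.coh_iff _ _).1 h)
    · intro h
      cases x with
      | inl a => cases x' with
        | inl a' => exact Sum.LiftRel.inl ((f.coh_iff _ _).2 (by cases h; assumption))
        | inr b' => exact absurd h (by intro hh; cases hh)
      | inr b => cases x' with
        | inl a' => exact absurd h (by intro hh; cases hh)
        | inr b' => exact Sum.LiftRel.inr ((g.coh_iff _ _).2 (by cases h; assumption))

/-- Linear negation as a covariant endofunctor of `CohI`. -/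
def dualFunctor : CohSpace ⥤ CohSpace where
  obj := CohSpace.dual
  map := CohEmb.dualMap
  map_id _ := rfl
  map_comp _ _ := rfl

/-- Tensor as a functor on the product category. -/
def tensorFunctor : CohSpace × CohSpace ⥤ CohSpace where
  obj p := p.1.tens p.2
  map f := CohEmb.tensMap f.1 f.2
  map_id _ := rfl
  map_comp _ _ := rfl

/-- Sum as a functor on the product category. -/
def sumFunctor : CohSpace × CohSpace ⥤ CohSpace where
  obj p := p.1.sum p.2
  map f := CohEmb.sumMap f.1 f.2
  map_id p := by
    apply CohEmb.ext
    funext x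
    cases x <;> rfl
  map_comp f g := by
    apply CohEmb.ext
    funext x
    cases x <;> rfl

/-- The category `CohI^n`. -/
abbrev CohTuple (n : ℕ) := Fin n → CohSpace

/-- A normal functor: one preserving filtered colimits and finite pullbacks. -/
def IsNormalFunctor {C : Type*} {D : Type*} [Category C] [Category D] (F : C ⥤ D) : Prop :=
  PreservesFilteredColimits F ∧ PreservesLimitsOfShape WalkingCospan F

/-- The web functor `CohI ⥤ Set`. -/
def webF : CohSpace ⥤ Type where
  obj X := X.web
  map f := TypeCat.ofHom f.toFun
  map_id _ := rfl
  map_comp _ _ := rfl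

/-- The category of elements of the web presheaf `|F|` of `F : CohI^n ⥤ CohI`. -/
abbrev Elts {n : ℕ} (F : CohTuple n ⥤ CohSpace) := (F ⋙ webF).Elements

/-- `(X⃗, x)` is a normal form of `F`: its webs are finite and it is initial in its own
slice category of `El(|F|)`. -/
def IsNormalForm {n : ℕ} {F : CohTuple n ⥤ CohSpace} (e : Elts F) : Prop :=
  (∀ i, Finite (e.1 i).web) ∧
    ∀ (f : Elts F) (u : f ⟶ e), ∃! v : e ⟶ f, v ≫ u = 𝟙 e

/-- The pointwise dual functor `F^⊥`. -/
def dualF {n : ℕ} (F : CohTuple n ⥤ CohSpace) : CohTuple n ⥤ CohSpace := F ⋙ dualFunctor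

/-- The pointwise tensor functor `F ⊗ G`. -/
def tensF {n : ℕ} (F G : CohTuple n ⥤ CohSpace) : CohTuple n ⥤ CohSpace :=
  F.prod' G ⋙ tensorFunctor

/-- The pointwise sum functor `F ⊕ G`. -/
def sumF {n : ℕ} (F G : CohTuple n ⥤ CohSpace) : CohTuple n ⥤ CohSpace :=
  F.prod' G ⋙ sumFunctor

/-- The pointwise linear implication functor `F ⊸ G`. -/
def lollyF {n : ℕ} (F G : CohTuple n ⥤ CohSpace) : CohTuple n ⥤ CohSpace :=
  dualF (tensF F (dualF G))

/-- The degree of a normal functor: the supremum of the cardinalities of the webs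
occurring in its normal forms. -/
noncomputable def degree {n : ℕ} (F : CohTuple n ⥤ CohSpace) : ℕ∞ :=
  ⨆ (e : Elts F) (_ : IsNormalForm e) (i : Fin n), (Nat.card (e.1 i).web : ℕ∞)

/-- `F` sends coherence spaces with finite webs to coherence spaces with finite webs. -/
def PreservesFiniteWebs {n : ℕ} (F : CohTuple n ⥤ CohSpace) : Prop :=
  ∀ X : CohTuple n, (∀ i, Finite (X i).web) → Finite (F.obj X).web

/-- A finite normal functor: one preserving finiteness of webs and of finite degree. -/
def IsFiniteFunctor {n : ℕ} (F : CohTuple n ⥤ CohSpace) : Prop :=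
  PreservesFiniteWebs F ∧ degree F < ⊤

/-- `NF(F)`: the set of isomorphism classes of normal forms of `F`. -/
def NFSet {n : ℕ} (F : CohTuple n ⥤ CohSpace) :
    Set (Quotient (isIsomorphicSetoid (Elts F))) :=
  { q | ∃ e : Elts F, IsNormalForm e ∧ Quotient.mk _ e = q }

/-- A uniform family of cliques of `F : CohI^n ⥤ CohI`. -/
def IsUniformFamily {n : ℕ} (F : CohTuple n ⥤ CohSpace)
    (c : ∀ X : CohTuple n, Set (F.obj X).web) : Prop :=
  (∀ X, (F.obj X).IsClique (c X)) ∧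
    ∀ (X Y : CohTuple n) (ι : X ⟶ Y), c X = (F.map ι).toFun ⁻¹' c Y

/-- Coherence of two normal forms: all their instantiations along embeddings into a
common tuple are coherent. -/
def NFCoherent {n : ℕ} {F : CohTuple n ⥤ CohSpace} (e e' : Elts F) : Prop :=
  ∀ (Z : CohTuple n) (ι : e.1 ⟶ Z) (κ : e'.1 ⟶ Z),
    (F.obj Z).coh ((F.map ι).toFun e.2) ((F.map κ).toFun e'.2)

/-- A coherence space structure on a canonical finite web `Fin k`. -/
structure FinCohData where
  k : ℕ
  r : Fin k → Fin k → Prop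
  refl : ∀ i, r i i
  symm : ∀ {i j}, r i j → r j i

/-- The coherence space associated to a `FinCohData`. -/
def FinCohData.toCoh (d : FinCohData) : CohSpace where
  web := Fin d.k
  coh := d.r
  refl := d.refl
  symm := d.symm

/-- A canonical tuple of finite coherence spaces. -/
def canonTuple {n : ℕ} (d : Fin n → FinCohData) : CohTuple n := fun i => (d i).toCoh

/-- Self-coherent normal forms of `F` carried by canonical tuples of finite coherence
spaces; the web of the trace is the set of their isomorphism classes. -/
def CanonNF {n : ℕ} (F : CohTuple n ⥤ CohSpace) : Type :=
  Σ d : Fin n → FinCohData,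
    { x : (F.obj (canonTuple d)).web //
        IsNormalForm (F := F) ⟨canonTuple d, x⟩ ∧
          NFCoherent (F := F) ⟨canonTuple d, x⟩ ⟨canonTuple d, x⟩ }

/-- The element of `El(|F|)` carried by a canonical normal form. -/
def CanonNF.toElts {n : ℕ} {F : CohTuple n ⥤ CohSpace} (c : CanonNF F) : Elts F :=
  ⟨canonTuple c.1, c.2.1⟩

/-- Canonical normal forms are identified when isomorphic in `El(|F|)`. -/
def traceSetoid {n : ℕ} (F : CohTuple n ⥤ CohSpace) : Setoid (CanonNF F) :=
  (isIsomorphicSetoid (Elts F)).comap CanonNF.toElts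

/-- The trace `Tr(F)`: isomorphism classes of self-coherent normal forms, with the
coherence relation between normal forms. -/
def Tr {n : ℕ} (F : CohTuple n ⥤ CohSpace) : CohSpace where
  web := Quotient (traceSetoid F)
  coh q q' := ∃ c c' : CanonNF F,
    Quotient.mk (traceSetoid F) c = q ∧ Quotient.mk (traceSetoid F) c' = q' ∧
      NFCoherent c.toElts c'.toElts
  refl q := by
    obtain ⟨c, rfl⟩ := Quotient.exists_rep q
    exact ⟨c, c, rfl, rfl, c.2.2.2⟩
  symm h := by
    obtain ⟨c, c', h1, h2, h3⟩ := h
    exact ⟨c', c, h2, h1, fun Z ι κ => (F.obj Z).symm (h3 Z κ ι)⟩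

/-- The family of functors whose pointwise pairing computes `Z ↦ (X₁,…,Xₙ,Z)`. -/
def gfam {n : ℕ} (X : CohTuple n) (i : Fin (n + 1)) : CohTuple 1 ⥤ CohSpace :=
  if h : (i : ℕ) < n then (Functor.const (CohTuple 1)).obj (X ⟨i, h⟩)
  else Pi.eval (fun _ : Fin 1 => CohSpace) 0

/-- The partial application `F(X₁,…,Xₙ,−)` of `F : CohI^(n+1) ⥤ CohI`. -/
def partialApp {n : ℕ} (F : CohTuple (n + 1) ⥤ CohSpace) (X : CohTuple n) :
    CohTuple 1 ⥤ CohSpace :=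
  Functor.pi' (gfam X) ⋙ F

/-- The embedding `(X⃗, Z) ↪ (Y⃗, Z)` induced componentwise by `ι : X⃗ ↪ Y⃗`. -/
def extHom {n : ℕ} {X Y : CohTuple n} (ι : X ⟶ Y) (Z : CohTuple 1) (i : Fin (n + 1)) :
    (gfam X i).obj Z ⟶ (gfam Y i).obj Z := by
  by_cases h : (i : ℕ) < n
  · simp only [gfam, dif_pos h]
    exact ι ⟨i, h⟩
  · simp only [gfam, dif_neg h]
    exact 𝟙 (Z 0)

/-- The embedding `extHom` as a morphism in `CohI^(n+1)`. -/
def extHomPi {n : ℕ} {X Y : CohTuple n} (ι : X ⟶ Y) (Z : CohTuple 1) :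
    (Functor.pi' (gfam X)).obj Z ⟶ (Functor.pi' (gfam Y)).obj Z :=
  fun i => extHom ι Z i

/-- Transport along an object equality `G.obj X = Tr (partialApp F X)`. -/
def trWebCast {n : ℕ} {F : CohTuple (n + 1) ⥤ CohSpace} {G : CohTuple n ⥤ CohSpace}
    (h : ∀ X, G.obj X = Tr (partialApp F X)) (X : CohTuple n) :
    (Tr (partialApp F X)).web → (G.obj X).web :=
  fun q => cast (congrArg CohSpace.web (h X)).symm q

/-- `G` acts on embeddings the way `∀(F)` does: normal forms are transported by
keeping the bound variables and substituting along `ι` on the free ones. -/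
def ForallAction {n : ℕ} (F : CohTuple (n + 1) ⥤ CohSpace) (G : CohTuple n ⥤ CohSpace)
    (hobj : ∀ X, G.obj X = Tr (partialApp F X)) : Prop :=
  ∀ (X Y : CohTuple n) (ι : X ⟶ Y) (c : CanonNF (partialApp F X)),
    ∃ c' : CanonNF (partialApp F Y),
      (G.map ι).toFun (trWebCast hobj X (Quotient.mk (traceSetoid _) c))
          = trWebCast hobj Y (Quotient.mk (traceSetoid _) c') ∧
        c'.1 = c.1 ∧
        HEq c'.2.1 ((F.map (extHomPi ι (canonTuple c.1))).toFun c.2.1)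

/-- `G` is (a presentation of) the functor `∀(F)`. -/
def IsForallExtension {n : ℕ} (F : CohTuple (n + 1) ⥤ CohSpace)
    (G : CohTuple n ⥤ CohSpace) : Prop :=
  ∃ hobj : ∀ X, G.obj X = Tr (partialApp F X), ForallAction F G hobj

/-- The uniform family of cliques obtained by instantiating a clique of the trace. -/
def instFam {n : ℕ} (F : CohTuple n ⥤ CohSpace) (c : Set (Tr F).web) :
    ∀ X : CohTuple n, Set (F.obj X).web := fun X =>
  { x | ∃ (d : CanonNF F) (ι : canonTuple d.1 ⟶ X),
      Quotient.mk (traceSetoid F) d ∈ c ∧ (F.map ι).toFun d.2.1 = x }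

namespace Stmt6
open CategoryTheory Limits

@[simp] lemma comp_toFun' {X Y Z : CohSpace} (f : X ⟶ Y) (g : Y ⟶ Z) (x : X.web) :
    (f ≫ g).toFun x = g.toFun (f.toFun x) := rfl

@[simp] lemma id_toFun' {X : CohSpace} (x : X.web) : CohEmb.toFun (𝟙 X) x = x := rfl

lemma toFun_congr {X Y : CohSpace} {f g : X ⟶ Y} (h : f = g) (x : X.web) :
    f.toFun x = g.toFun x := by rw [h]

lemma bij_of_iso {X Y : CohSpace} (f : X ⟶ Y) [IsIso f] : Function.Bijective f.toFun := by
  refine ⟨f.inj, fun y => ⟨(inv f).toFun y, ?_⟩⟩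
  have : (inv f ≫ f).toFun y = y := by simp
  exact this

lemma eqToHom_sandwich {X' X Y Y' : CohSpace} {h1 : X' = X} {f : X ⟶ Y} {h2 : Y = Y'}
    {h3 : Y' = Y} {h4 : X' = X} : (eqToHom h1 ≫ f ≫ eqToHom h2) ≫ eqToHom h3 = eqToHom h4 ≫ f := by
  cases h1; cases h2; simp

lemma eqToHom_bij {X Y : CohSpace} (h : X = Y) : Function.Bijective (eqToHom h).toFun :=
  bij_of_iso _

/-! ### Filtered colimits in `CohSpace` -/

section Filt

variable {J : Type} [SmallCategory J] [IsFiltered J] (D : J ⥤ CohSpace)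

/-- The relation identifying elements of a filtered diagram of coherence spaces. -/
def frel (p q : Σ j : J, (D.obj j).web) : Prop :=
  ∃ (l : J) (u : p.1 ⟶ l) (v : q.1 ⟶ l), (D.map u).toFun p.2 = (D.map v).toFun q.2

lemma frel_refl (p) : frel D p p := ⟨p.1, 𝟙 _, 𝟙 _, rfl⟩

lemma frel_symm {p q} (h : frel D p q) : frel D q p := by
  obtain ⟨l, u, v, h⟩ := h; exact ⟨l, v, u, h.symm⟩

lemma frel_trans {p q r} (h₁ : frel D p q) (h₂ : frel D q r) : frel D p r := by
  obtain ⟨l, u, v, h₁⟩ := h₁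
  obtain ⟨l', u', v', h₂⟩ := h₂
  let m := IsFiltered.max l l'
  let a : l ⟶ m := IsFiltered.leftToMax l l'
  let b : l' ⟶ m := IsFiltered.rightToMax l l'
  let w : m ⟶ IsFiltered.coeq (v ≫ a) (u' ≫ b) := IsFiltered.coeqHom (v ≫ a) (u' ≫ b)
  refine ⟨_, u ≫ a ≫ w, v' ≫ b ≫ w, ?_⟩
  have hc : (v ≫ a) ≫ w = (u' ≫ b) ≫ w := IsFiltered.coeq_condition _ _
  have e1 : (D.map (u ≫ a ≫ w)).toFun p.2 = (D.map (v ≫ a ≫ w)).toFun q.2 := by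
    simp only [D.map_comp, comp_toFun', h₁]
  have e2 : (D.map (v ≫ a ≫ w)).toFun q.2 = (D.map (u' ≫ b ≫ w)).toFun q.2 := by
    have := congrArg (fun f => (D.map f).toFun q.2) hc
    simpa [Category.assoc] using this
  have e3 : (D.map (u' ≫ b ≫ w)).toFun q.2 = (D.map (v' ≫ b ≫ w)).toFun r.2 := by
    simp only [D.map_comp, comp_toFun', h₂]
  simp only [e1, e2, e3]

/-- The setoid of the filtered colimit. -/
def fsetoid : Setoid (Σ j : J, (D.obj j).web) :=
  ⟨frel D, frel_refl D, frel_symm D, frel_trans D⟩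

/-- Coherence of representatives is independent of the chosen instantiation stage. -/
lemma coh_transfer {j k : J} {x : (D.obj j).web} {y : (D.obj k).web}
    {l : J} {u : j ⟶ l} {v : k ⟶ l}
    (h : (D.obj l).coh ((D.map u).toFun x) ((D.map v).toFun y))
    {l' : J} (u' : j ⟶ l') (v' : k ⟶ l') :
    (D.obj l').coh ((D.map u').toFun x) ((D.map v').toFun y) := by
  let m := IsFiltered.max l l'
  let a : l ⟶ m := IsFiltered.leftToMax l l'
  let b : l' ⟶ m := IsFiltered.rightToMax l l'
  have h1 : (D.obj m).coh ((D.map (u ≫ a)).toFun x) ((D.map (v ≫ a)).toFun y) := by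
    rw [D.map_comp, D.map_comp]
    exact ((D.map a).coh_iff _ _).1 h
  let m₁ := IsFiltered.coeq (u ≫ a) (u' ≫ b)
  let w₁ : m ⟶ m₁ := IsFiltered.coeqHom (u ≫ a) (u' ≫ b)
  have hw₁ : (u ≫ a) ≫ w₁ = (u' ≫ b) ≫ w₁ := IsFiltered.coeq_condition _ _
  have h2 : (D.obj m₁).coh ((D.map ((u' ≫ b) ≫ w₁)).toFun x)
      ((D.map ((v ≫ a) ≫ w₁)).toFun y) := by
    rw [← hw₁, D.map_comp ((u ≫ a)), D.map_comp ((v ≫ a))]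
    exact ((D.map w₁).coh_iff _ _).1 h1
  let m₂ := IsFiltered.coeq ((v ≫ a) ≫ w₁) ((v' ≫ b) ≫ w₁)
  let w₂ : m₁ ⟶ m₂ := IsFiltered.coeqHom _ _
  have hw₂ : ((v ≫ a) ≫ w₁) ≫ w₂ = ((v' ≫ b) ≫ w₁) ≫ w₂ := IsFiltered.coeq_condition _ _
  have h3 : (D.obj m₂).coh ((D.map (((u' ≫ b) ≫ w₁) ≫ w₂)).toFun x)
      ((D.map (((v' ≫ b) ≫ w₁) ≫ w₂)).toFun y) := by
    rw [← hw₂, D.map_comp (((u' ≫ b) ≫ w₁)), D.map_comp (((v ≫ a) ≫ w₁))]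
    exact ((D.map w₂).coh_iff _ _).1 h2
  simp only [D.map_comp, comp_toFun', Category.assoc] at h3
  refine ((D.map (b ≫ w₁ ≫ w₂)).coh_iff _ _).2 ?_
  simp only [D.map_comp, comp_toFun']
  exact h3

/-- The filtered colimit coherence space. -/
def filtColim : CohSpace where
  web := Quotient (fsetoid D)
  coh q q' := ∃ (j k : J) (x : (D.obj j).web) (y : (D.obj k).web) (l : J) (u : j ⟶ l)
      (v : k ⟶ l), Quotient.mk _ ⟨j, x⟩ = q ∧ Quotient.mk _ ⟨k, y⟩ = q' ∧
        (D.obj l).coh ((D.map u).toFun x) ((D.map v).toFun y)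
  refl q := by
    obtain ⟨⟨j, x⟩, rfl⟩ := Quotient.exists_rep q
    exact ⟨j, j, x, x, j, 𝟙 _, 𝟙 _, rfl, rfl, (D.obj j).refl _⟩
  symm {q q'} h := by
    obtain ⟨j, k, x, y, l, u, v, h1, h2, h3⟩ := h
    exact ⟨k, j, y, x, l, v, u, h2, h1, (D.obj l).symm h3⟩

/-- The canonical injections into the filtered colimit. -/
def filtIns (j : J) : D.obj j ⟶ filtColim D where
  toFun x := Quotient.mk _ ⟨j, x⟩
  inj := by
    intro x y h
    have h' : frel D ⟨j, x⟩ ⟨j, y⟩ := Quotient.exact h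
    obtain ⟨l, u, v, h'⟩ := h'
    let w := IsFiltered.coeqHom u v
    have hw : u ≫ w = v ≫ w := IsFiltered.coeq_condition _ _
    have : (D.map (u ≫ w)).toFun x = (D.map (u ≫ w)).toFun y := by
      rw [D.map_comp]
      simp only [comp_toFun', h']
      rw [← comp_toFun', ← D.map_comp, ← hw, D.map_comp, comp_toFun']
    exact (D.map (u ≫ w)).inj this
  coh_iff x y := by
    constructor
    · intro h
      refine ⟨j, j, x, y, j, 𝟙 _, 𝟙 _, rfl, rfl, by simpa using h⟩
    · rintro ⟨j', k', x', y', l, u, v, h1, h2, h3⟩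
      obtain ⟨p, a, b, hab⟩ : frel D ⟨j', x'⟩ ⟨j, x⟩ := Quotient.exact h1
      obtain ⟨p', a', b', hab'⟩ : frel D ⟨k', y'⟩ ⟨j, y⟩ := Quotient.exact h2
      let m := IsFiltered.max p p'
      let c : p ⟶ m := IsFiltered.leftToMax p p'
      let d : p' ⟶ m := IsFiltered.rightToMax p p'
      have hm : (D.obj m).coh ((D.map (a ≫ c)).toFun x') ((D.map (a' ≫ d)).toFun y') :=
        coh_transfer D h3 (a ≫ c) (a' ≫ d)
      have e1 : (D.map (a ≫ c)).toFun x' = (D.map (b ≫ c)).toFun x := by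
        rw [D.map_comp, D.map_comp]; simp only [comp_toFun', hab]
      have e2 : (D.map (a' ≫ d)).toFun y' = (D.map (b' ≫ d)).toFun y := by
        rw [D.map_comp, D.map_comp]; simp only [comp_toFun', hab']
      rw [e1, e2] at hm
      have hm' : (D.obj _).coh ((D.map ((b ≫ c) ≫ IsFiltered.coeqHom (b ≫ c) (b' ≫ d))).toFun x)
          ((D.map ((b' ≫ d) ≫ IsFiltered.coeqHom (b ≫ c) (b' ≫ d))).toFun y) :=
        coh_transfer D hm _ _
      rw [← IsFiltered.coeq_condition (b ≫ c) (b' ≫ d)] at hm'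
      exact ((D.map ((b ≫ c) ≫ IsFiltered.coeqHom (b ≫ c) (b' ≫ d))).coh_iff _ _).2 hm'

lemma filtIns_w {j l : J} (u : j ⟶ l) : D.map u ≫ filtIns D l = filtIns D j := by
  apply CohEmb.ext
  funext x
  exact Quotient.sound ⟨l, 𝟙 l, u, by simp⟩

/-- The colimit cocone. -/
def filtCocone : Cocone D where
  pt := filtColim D
  ι := { app := filtIns D, naturality := fun j l u => by simp [filtIns_w] }

lemma cocone_stage (s : Cocone D) {j l : J} (u : j ⟶ l) (x : (D.obj j).web) :
    (s.ι.app j).toFun x = (s.ι.app l).toFun ((D.map u).toFun x) := by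
  rw [← s.w u]; rfl

/-- The descent map out of the filtered colimit. -/
def fdesc (s : Cocone D) : (filtColim D).web → s.pt.web :=
  Quotient.lift (fun p => (s.ι.app p.1).toFun p.2) (by
    rintro ⟨j, x⟩ ⟨k, y⟩ ⟨l, u, v, h⟩
    show (s.ι.app j).toFun x = (s.ι.app k).toFun y
    refine (cocone_stage D s u x).trans ?_
    rw [show (D.map u).toFun x = (D.map v).toFun y from h]
    exact (cocone_stage D s v y).symm)

@[simp] lemma fdesc_mk (s : Cocone D) (j : J) (x : (D.obj j).web) :
    fdesc D s (Quotient.mk _ ⟨j, x⟩) = (s.ι.app j).toFun x := rfl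

/-- The cocone `filtCocone` is a colimit. -/
def filtIsColimit : IsColimit (filtCocone D) where
  desc s :=
    { toFun := fdesc D s
      inj := by
        rintro ⟨⟨j, x⟩⟩ ⟨⟨k, y⟩⟩ h
        have h' : (s.ι.app j).toFun x = (s.ι.app k).toFun y := h
        apply Quotient.sound
        let l := IsFiltered.max j k
        let u : j ⟶ l := IsFiltered.leftToMax j k
        let v : k ⟶ l := IsFiltered.rightToMax j k
        refine ⟨l, u, v, (s.ι.app l).inj ?_⟩
        rw [← cocone_stage D s u x, ← cocone_stage D s v y]; exact h'
      coh_iff := by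
        intro q q'
        constructor
        · rintro ⟨j', k', x', y', l, u, v, rfl, rfl, h3⟩
          show s.pt.coh ((s.ι.app j').toFun x') ((s.ι.app k').toFun y')
          rw [cocone_stage D s u x', cocone_stage D s v y']
          exact ((s.ι.app l).coh_iff _ _).1 h3
        · intro h
          obtain ⟨⟨j, x⟩, rfl⟩ := Quotient.exists_rep q
          obtain ⟨⟨k, y⟩, rfl⟩ := Quotient.exists_rep q'
          have h' : s.pt.coh ((s.ι.app j).toFun x) ((s.ι.app k).toFun y) := h
          rw [cocone_stage D s (IsFiltered.leftToMax j k) x,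
            cocone_stage D s (IsFiltered.rightToMax j k) y] at h'
          exact ⟨j, k, x, y, IsFiltered.max j k, IsFiltered.leftToMax j k,
            IsFiltered.rightToMax j k, rfl, rfl,
            ((s.ι.app (IsFiltered.max j k)).coh_iff _ _).2 h'⟩ }
  fac s j := by apply CohEmb.ext; funext x; rfl
  uniq s m w := by
    apply CohEmb.ext
    funext q
    obtain ⟨⟨j, x⟩, rfl⟩ := Quotient.exists_rep q
    exact toFun_congr (w j) x

/-- Elements of any colimit cocone over a filtered diagram come from some stage. -/
lemma stage_surj {t : Cocone D} (ht : IsColimit t) (x : t.pt.web) :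
    ∃ (j : J) (y : (D.obj j).web), (t.ι.app j).toFun y = x := by
  obtain ⟨⟨j, y⟩, hy⟩ := Quotient.exists_rep
    (((filtIsColimit D).coconePointUniqueUpToIso ht).inv.toFun x)
  refine ⟨j, y, ?_⟩
  have h1 := toFun_congr (IsColimit.comp_coconePointUniqueUpToIso_hom (filtIsColimit D) ht j) y
  have h2 : (t.ι.app j).toFun y
      = ((filtIsColimit D).coconePointUniqueUpToIso ht).hom.toFun ((filtIns D j).toFun y) :=
    h1.symm
  rw [h2, show (filtIns D j).toFun y
      = ((filtIsColimit D).coconePointUniqueUpToIso ht).inv.toFun x from hy]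
  have h3 : ((((filtIsColimit D).coconePointUniqueUpToIso ht).inv ≫
      ((filtIsColimit D).coconePointUniqueUpToIso ht).hom)).toFun x = x := by
    rw [Iso.inv_hom_id]; rfl
  exact h3

/-- Elements equal in a filtered colimit are equal at some stage. -/
lemma stage_eq {t : Cocone D} (ht : IsColimit t) {j k : J} {x : (D.obj j).web}
    {y : (D.obj k).web} (h : (t.ι.app j).toFun x = (t.ι.app k).toFun y) :
    ∃ (l : J) (u : j ⟶ l) (v : k ⟶ l), (D.map u).toFun x = (D.map v).toFun y := by
  have h1 : ∀ (j : J) (x : (D.obj j).web), (t.ι.app j).toFun x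
      = ((filtIsColimit D).coconePointUniqueUpToIso ht).hom.toFun ((filtIns D j).toFun x) :=
    fun j x =>
      (toFun_congr (IsColimit.comp_coconePointUniqueUpToIso_hom (filtIsColimit D) ht j) x).symm
  rw [h1 j x, h1 k y] at h
  have h2 : (filtIns D j).toFun x = (filtIns D k).toFun y :=
    (((filtIsColimit D).coconePointUniqueUpToIso ht).hom).inj h
  exact Quotient.exact h2

end Filt

/-! ### Elementwise pullbacks -/

section PB

/-- The one-point embedding. -/
def ptEmb (X : CohSpace) (x : X.web) : oneCoh ⟶ X where
  toFun _ := x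
  inj _ _ _ := rfl
  coh_iff _ _ := ⟨fun _ => X.refl x, fun _ => trivial⟩

/-- The elementwise pullback property of a square of embeddings. -/
def ElemPB {P A B Z : CohSpace} (fst : P ⟶ A) (snd : P ⟶ B) (f : A ⟶ Z) (g : B ⟶ Z) : Prop :=
  ∀ (a : A.web) (b : B.web), f.toFun a = g.toFun b →
    ∃! p : P.web, fst.toFun p = a ∧ snd.toFun p = b

lemma ElemPB.conj {P A B Z P' A' B' Z' : CohSpace}
    {fst : P ⟶ A} {snd : P ⟶ B} {f : A ⟶ Z} {g : B ⟶ Z}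
    (h : ElemPB fst snd f g)
    {fst' : P' ⟶ A'} {snd' : P' ⟶ B'} {f' : A' ⟶ Z'} {g' : B' ⟶ Z'}
    (eP : P' ⟶ P) (eA : A' ⟶ A) (eB : B' ⟶ B) (eZ : Z' ⟶ Z)
    (hP : Function.Bijective eP.toFun) (hA : Function.Bijective eA.toFun)
    (hB : Function.Bijective eB.toFun)
    (w1 : fst' ≫ eA = eP ≫ fst) (w2 : snd' ≫ eB = eP ≫ snd)
    (w3 : f' ≫ eZ = eA ≫ f) (w4 : g' ≫ eZ = eB ≫ g) : ElemPB fst' snd' f' g' := by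
  intro a b hab
  have hfg : f.toFun (eA.toFun a) = g.toFun (eB.toFun b) := by
    have h3 := toFun_congr w3 a
    have h4 := toFun_congr w4 b
    simp only [comp_toFun'] at h3 h4
    rw [← h3, ← h4, hab]
  obtain ⟨p, ⟨hp1, hp2⟩, hpu⟩ := h (eA.toFun a) (eB.toFun b) hfg
  obtain ⟨p', hp'⟩ := hP.2 p
  refine ⟨p', ⟨hA.1 ?_, hB.1 ?_⟩, ?_⟩
  · have h1 := toFun_congr w1 p'
    simp only [comp_toFun'] at h1
    rw [h1, hp', hp1]
  · have h2 := toFun_congr w2 p'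
    simp only [comp_toFun'] at h2
    rw [h2, hp', hp2]
  · rintro q ⟨hq1, hq2⟩
    apply hP.1
    rw [hp']
    apply hpu
    constructor
    · have h1 := toFun_congr w1 q
      simp only [comp_toFun'] at h1
      rw [← h1, hq1]
    · have h2 := toFun_congr w2 q
      simp only [comp_toFun'] at h2
      rw [← h2, hq2]

open CategoryTheory.Limits in
lemma elemPB_of_isPullback {P A B Z : CohSpace} {fst : P ⟶ A} {snd : P ⟶ B}
    {f : A ⟶ Z} {g : B ⟶ Z} (h : IsPullback fst snd f g) : ElemPB fst snd f g := by
  intro a b hab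
  have hcomm : ptEmb A a ≫ f = ptEmb B b ≫ g := by
    apply CohEmb.ext; funext _; exact hab
  refine ⟨(h.lift (ptEmb A a) (ptEmb B b) hcomm).toFun PUnit.unit, ⟨?_, ?_⟩, ?_⟩
  · exact toFun_congr (h.lift_fst (ptEmb A a) (ptEmb B b) hcomm) PUnit.unit
  · exact toFun_congr (h.lift_snd (ptEmb A a) (ptEmb B b) hcomm) PUnit.unit
  · rintro q ⟨hq1, hq2⟩
    have he : ptEmb P q = h.lift (ptEmb A a) (ptEmb B b) hcomm := by
      apply h.hom_ext
      · rw [h.lift_fst]; apply CohEmb.ext; funext _; exact hq1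
      · rw [h.lift_snd]; apply CohEmb.ext; funext _; exact hq2
    exact toFun_congr he PUnit.unit

open CategoryTheory.Limits in
lemma isPullback_pi {m : ℕ} {P A B Z : CohTuple m} {fst : P ⟶ A} {snd : P ⟶ B}
    {f : A ⟶ Z} {g : B ⟶ Z} (comm : fst ≫ f = snd ≫ g)
    (h : ∀ i, ElemPB (fst i) (snd i) (f i) (g i)) : IsPullback fst snd f g := by
  have hl : IsLimit (PullbackCone.mk fst snd comm) := by
    refine PullbackCone.IsLimit.mk comm
      (fun s => fun i =>
        { toFun := fun q => ((h i) ((s.fst i).toFun q) ((s.snd i).toFun q)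
            (toFun_congr (congrFun s.condition i) q)).exists.choose
          inj := by
            intro q q' hqq
            apply (s.fst i).inj
            have h1 := ((h i) ((s.fst i).toFun q) ((s.snd i).toFun q)
              (toFun_congr (congrFun s.condition i) q)).exists.choose_spec.1
            have h2 := ((h i) ((s.fst i).toFun q') ((s.snd i).toFun q')
              (toFun_congr (congrFun s.condition i) q')).exists.choose_spec.1
            rw [← h1, ← h2]
            exact congrArg _ hqq
          coh_iff := by
            intro q q'
            have h1 := ((h i) ((s.fst i).toFun q) ((s.snd i).toFun q)
              (toFun_congr (congrFun s.condition i) q)).exists.choose_spec.1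
            have h2 := ((h i) ((s.fst i).toFun q') ((s.snd i).toFun q')
              (toFun_congr (congrFun s.condition i) q')).exists.choose_spec.1
            rw [((s.fst i).coh_iff q q')]
            have h3 := (fst i).coh_iff (((h i) ((s.fst i).toFun q) ((s.snd i).toFun q)
                (toFun_congr (congrFun s.condition i) q)).exists.choose)
              (((h i) ((s.fst i).toFun q') ((s.snd i).toFun q')
                (toFun_congr (congrFun s.condition i) q')).exists.choose)
            rw [h1, h2] at h3
            exact h3.symm })
      (fun s => funext fun i => CohEmb.ext (funext fun q =>
        ((h i) ((s.fst i).toFun q) ((s.snd i).toFun q)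
          (toFun_congr (congrFun s.condition i) q)).exists.choose_spec.1))
      (fun s => funext fun i => CohEmb.ext (funext fun q =>
        ((h i) ((s.fst i).toFun q) ((s.snd i).toFun q)
          (toFun_congr (congrFun s.condition i) q)).exists.choose_spec.2))
      (fun s mm w1 w2 => funext fun i => CohEmb.ext (funext fun q => by
        have hu := ((h i) ((s.fst i).toFun q) ((s.snd i).toFun q)
          (toFun_congr (congrFun s.condition i) q)).unique
          (y₁ := (mm i).toFun q)
          (y₂ := ((h i) ((s.fst i).toFun q) ((s.snd i).toFun q)
            (toFun_congr (congrFun s.condition i) q)).exists.choose)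
        apply hu
        · exact ⟨toFun_congr (congrFun w1 i) q, toFun_congr (congrFun w2 i) q⟩
        · exact ((h i) ((s.fst i).toFun q) ((s.snd i).toFun q)
            (toFun_congr (congrFun s.condition i) q)).exists.choose_spec))
  exact IsPullback.of_isLimit hl

/-- The concrete pullback of two embeddings. -/
def pbCoh {A B Z : CohSpace} (f : A ⟶ Z) (g : B ⟶ Z) : CohSpace where
  web := { p : A.web × B.web // f.toFun p.1 = g.toFun p.2 }
  coh p q := A.coh p.1.1 q.1.1
  refl _ := A.refl _
  symm h := A.symm h

def pbFst {A B Z : CohSpace} (f : A ⟶ Z) (g : B ⟶ Z) : pbCoh f g ⟶ A where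
  toFun p := p.1.1
  inj := by
    rintro ⟨⟨a, b⟩, hp⟩ ⟨⟨a', b'⟩, hp'⟩ h
    dsimp at h hp hp'
    refine Subtype.ext (Prod.ext h (g.inj ?_))
    rw [← hp, ← hp', h]
  coh_iff _ _ := Iff.rfl

def pbSnd {A B Z : CohSpace} (f : A ⟶ Z) (g : B ⟶ Z) : pbCoh f g ⟶ B where
  toFun p := p.1.2
  inj := by
    rintro ⟨⟨a, b⟩, hp⟩ ⟨⟨a', b'⟩, hp'⟩ h
    dsimp at h hp hp'
    refine Subtype.ext (Prod.ext (f.inj ?_) h)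
    rw [hp, hp', h]
  coh_iff := by
    rintro ⟨⟨a, b⟩, hp⟩ ⟨⟨a', b'⟩, hp'⟩
    show A.coh a a' ↔ B.coh b b'
    rw [f.coh_iff a a', hp, hp', ← g.coh_iff]

lemma pbComm {A B Z : CohSpace} (f : A ⟶ Z) (g : B ⟶ Z) :
    pbFst f g ≫ f = pbSnd f g ≫ g := by
  apply CohEmb.ext; funext p; exact p.2

lemma pbElem {A B Z : CohSpace} (f : A ⟶ Z) (g : B ⟶ Z) :
    ElemPB (pbFst f g) (pbSnd f g) f g := by
  intro a b hab
  refine ⟨⟨(a, b), hab⟩, ⟨rfl, rfl⟩, ?_⟩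
  rintro ⟨⟨a', b'⟩, hp⟩ ⟨h1, h2⟩
  exact Subtype.ext (Prod.ext h1 h2)

/-- The trivial elementwise pullback square. -/
lemma elemPB_id {X Y : CohSpace} (f : X ⟶ Y) : ElemPB f (𝟙 X) (𝟙 Y) f := by
  intro a b hab
  exact ⟨b, ⟨hab.symm, rfl⟩, fun q ⟨_, hq2⟩ => hq2⟩

lemma elemPB_id' {X Y : CohSpace} (f : X ⟶ Y) : ElemPB (𝟙 X) f f (𝟙 Y) := by
  intro a b hab
  exact ⟨a, ⟨rfl, hab⟩, fun q ⟨hq1, _⟩ => hq1⟩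

end PB

/-! ### Generic cocone helpers -/

section Gen

variable {J : Type} [SmallCategory J] {C : Type*} [Category C]

open CategoryTheory.Limits

/-- The constant cocone. -/
@[reducible] def constCocone (Z : C) : Cocone ((Functor.const J).obj Z) where
  pt := Z
  ι := { app := fun _ => 𝟙 Z, naturality := by intros; simp }

/-- Over a filtered category, the constant cocone is a colimit. -/
noncomputable def constIsColimit [IsFiltered J] (Z : C) : IsColimit (constCocone (J := J) Z) := by
  have hne : Nonempty J := IsFiltered.nonempty
  let j₀ : J := hne.some
  have e : ∀ (s : Cocone ((Functor.const J).obj Z)) (a b : J) (u : a ⟶ b),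
      s.ι.app a = s.ι.app b := by
    intro s a b u
    rw [← s.w u]
    simp
  exact
    { desc := fun s => s.ι.app j₀
      fac := fun s j => by
        have h1 := e s j (IsFiltered.max j j₀) (IsFiltered.leftToMax j j₀)
        have h2 := e s j₀ (IsFiltered.max j j₀) (IsFiltered.rightToMax j j₀)
        show 𝟙 Z ≫ s.ι.app j₀ = s.ι.app j
        rw [Category.id_comp, h2, h1]
      uniq := fun s m w => by
        show m = s.ι.app j₀
        rw [← w j₀]
        show m = 𝟙 Z ≫ m
        rw [Category.id_comp] }

/-- Auxiliary cocone for `colimitConj`. -/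
@[reducible] def conjCocone {D D' : J ⥤ C} (e : ∀ j, D'.obj j ≅ D.obj j)
    (nat : ∀ {j l : J} (u : j ⟶ l), D'.map u ≫ (e l).hom = (e j).hom ≫ D.map u)
    (s : Cocone D') : Cocone D where
  pt := s.pt
  ι :=
    { app := fun j => (e j).inv ≫ s.ι.app j
      naturality := fun j l u => by
        have h1 : D.map u = (e j).inv ≫ D'.map u ≫ (e l).hom := by
          rw [nat u, Iso.inv_hom_id_assoc]
        rw [h1]
        simp only [Category.assoc, Iso.hom_inv_id_assoc, Functor.const_obj_map,
          Category.comp_id]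
        rw [← s.w u]
        simp }

/-- Transfer of colimits along componentwise isomorphisms of cocones. -/
def colimitConj {D D' : J ⥤ C} {t : Cocone D} (ht : IsColimit t) (t' : Cocone D')
    (e : ∀ j, D'.obj j ≅ D.obj j)
    (nat : ∀ {j l : J} (u : j ⟶ l), D'.map u ≫ (e l).hom = (e j).hom ≫ D.map u)
    (einf : t'.pt ≅ t.pt) (comp : ∀ j, t'.ι.app j ≫ einf.hom = (e j).hom ≫ t.ι.app j) :
    IsColimit t' :=
  { desc := fun s => einf.hom ≫ ht.desc (conjCocone e nat s)
    fac := fun s j => by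
      rw [← Category.assoc, comp j, Category.assoc, ht.fac (conjCocone e nat s) j]
      show (e j).hom ≫ (e j).inv ≫ s.ι.app j = s.ι.app j
      rw [Iso.hom_inv_id_assoc]
    uniq := fun s m w => by
      have h2 : einf.inv ≫ m = ht.desc (conjCocone e nat s) := by
        apply ht.uniq (conjCocone e nat s)
        intro j
        have h3 : t.ι.app j = (e j).inv ≫ t'.ι.app j ≫ einf.hom := by
          rw [comp j, Iso.inv_hom_id_assoc]
        rw [h3]
        simp only [Category.assoc, Iso.hom_inv_id_assoc]
        rw [w j]
      show m = einf.hom ≫ ht.desc (conjCocone e nat s)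
      rw [← h2, Iso.hom_inv_id_assoc] }

/-- Colimits in a pi category are detected componentwise. -/
def piIsColimit {m : ℕ} {EK : J ⥤ CohTuple m} (t : Cocone EK)
    (h : ∀ i, IsColimit ((CategoryTheory.Pi.eval _ i).mapCocone t)) : IsColimit t where
  desc s := fun i => (h i).desc ((CategoryTheory.Pi.eval _ i).mapCocone s)
  fac s j := funext fun i => (h i).fac ((CategoryTheory.Pi.eval _ i).mapCocone s) j
  uniq s m w := funext fun i => (h i).uniq ((CategoryTheory.Pi.eval _ i).mapCocone s) (m i)
    (fun j => congrFun (w j) i)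

end Gen

/-! ### The extension morphisms -/

section Ext

variable {n : ℕ}

lemma gfam_lt {X : CohTuple n} {i : Fin (n + 1)} (h : (i : ℕ) < n) :
    gfam X i = (Functor.const (CohTuple 1)).obj (X ⟨i, h⟩) := dif_pos h

lemma gfam_ge {X : CohTuple n} {i : Fin (n + 1)} (h : ¬ (i : ℕ) < n) :
    gfam X i = Pi.eval (fun _ : Fin 1 => CohSpace) 0 := dif_neg h

lemma gfam_obj_lt {X : CohTuple n} {i : Fin (n + 1)} (h : (i : ℕ) < n) (Z : CohTuple 1) :
    (gfam X i).obj Z = X ⟨i, h⟩ := by rw [gfam_lt h]; rfl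

lemma gfam_obj_ge {X : CohTuple n} {i : Fin (n + 1)} (h : ¬ (i : ℕ) < n) (Z : CohTuple 1) :
    (gfam X i).obj Z = Z 0 := by rw [gfam_ge h]; rfl

lemma gfam_map_lt {X : CohTuple n} {i : Fin (n + 1)} (h : (i : ℕ) < n) {Z Z' : CohTuple 1}
    (u : Z ⟶ Z') : (gfam X i).map u
      = eqToHom (gfam_obj_lt h Z) ≫ eqToHom (gfam_obj_lt h Z').symm := by
  rw [Functor.congr_hom (gfam_lt (X := X) h) u]
  simp

lemma gfam_map_ge {X : CohTuple n} {i : Fin (n + 1)} (h : ¬ (i : ℕ) < n) {Z Z' : CohTuple 1}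
    (u : Z ⟶ Z') : (gfam X i).map u
      = eqToHom (gfam_obj_ge h Z) ≫ u 0 ≫ eqToHom (gfam_obj_ge h Z').symm := by
  rw [Functor.congr_hom (gfam_ge (X := X) h) u]
  rfl

/-- The componentwise extension morphism. -/
def myExt {X Y : CohTuple n} (ι : X ⟶ Y) (Z : CohTuple 1) (i : Fin (n + 1)) :
    (gfam X i).obj Z ⟶ (gfam Y i).obj Z :=
  if h : (i : ℕ) < n then
    eqToHom (gfam_obj_lt h Z) ≫ ι ⟨i, h⟩ ≫ eqToHom (gfam_obj_lt h Z).symm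
  else eqToHom ((gfam_obj_ge (X := X) h Z).trans (gfam_obj_ge (X := Y) h Z).symm)

lemma myExt_lt {X Y : CohTuple n} (ι : X ⟶ Y) (Z : CohTuple 1) {i : Fin (n + 1)}
    (h : (i : ℕ) < n) : myExt ι Z i
      = eqToHom (gfam_obj_lt h Z) ≫ ι ⟨i, h⟩ ≫ eqToHom (gfam_obj_lt h Z).symm := dif_pos h

lemma myExt_ge {X Y : CohTuple n} (ι : X ⟶ Y) (Z : CohTuple 1) {i : Fin (n + 1)}
    (h : ¬ (i : ℕ) < n) : myExt ι Z i
      = eqToHom ((gfam_obj_ge (X := X) h Z).trans (gfam_obj_ge (X := Y) h Z).symm) := dif_neg h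

/-- The extension morphism in `CohTuple (n + 1)`. -/
def extPi {X Y : CohTuple n} (ι : X ⟶ Y) (Z : CohTuple 1) :
    (Functor.pi' (gfam X)).obj Z ⟶ (Functor.pi' (gfam Y)).obj Z := fun i => myExt ι Z i

lemma extPi_id (X : CohTuple n) (Z : CohTuple 1) : extPi (𝟙 X) Z = 𝟙 _ := by
  funext i
  show myExt (𝟙 X) Z i = 𝟙 ((gfam X i).obj Z)
  by_cases h : (i : ℕ) < n
  · rw [myExt_lt _ _ h]
    show eqToHom _ ≫ 𝟙 _ ≫ eqToHom _ = _
    simp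
  · rw [myExt_ge _ _ h]
    simp

lemma extPi_comp {X Y W : CohTuple n} (ι : X ⟶ Y) (κ : Y ⟶ W) (Z : CohTuple 1) :
    extPi (ι ≫ κ) Z = extPi ι Z ≫ extPi κ Z := by
  funext i
  show myExt (ι ≫ κ) Z i = myExt ι Z i ≫ myExt κ Z i
  by_cases h : (i : ℕ) < n
  · rw [myExt_lt _ _ h, myExt_lt _ _ h, myExt_lt _ _ h]
    show eqToHom _ ≫ (ι ⟨i, h⟩ ≫ κ ⟨i, h⟩) ≫ eqToHom _ = _
    simp
  · rw [myExt_ge _ _ h, myExt_ge _ _ h, myExt_ge _ _ h]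
    simp

lemma extPi_natural {X Y : CohTuple n} (ι : X ⟶ Y) {Z Z' : CohTuple 1} (u : Z ⟶ Z') :
    (Functor.pi' (gfam X)).map u ≫ extPi ι Z' = extPi ι Z ≫ (Functor.pi' (gfam Y)).map u := by
  funext i
  show (gfam X i).map u ≫ myExt ι Z' i = myExt ι Z i ≫ (gfam Y i).map u
  by_cases h : (i : ℕ) < n
  · rw [gfam_map_lt h u, gfam_map_lt h u, myExt_lt _ _ h, myExt_lt _ _ h]
    simp
  · rw [gfam_map_ge h u, gfam_map_ge h u, myExt_ge _ _ h, myExt_ge _ _ h]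
    simp

/-- The extension natural transformation. -/
def extNat {X Y : CohTuple n} (ι : X ⟶ Y) : Functor.pi' (gfam X) ⟶ Functor.pi' (gfam Y) where
  app Z := extPi ι Z
  naturality _ _ u := extPi_natural ι u

/-- The natural transformation `F(ι, −) : F(X, −) ⟶ F(Y, −)`. -/
def etaF (F : CohTuple (n + 1) ⥤ CohSpace) {X Y : CohTuple n} (ι : X ⟶ Y) :
    partialApp F X ⟶ partialApp F Y :=
  Functor.whiskerRight (extNat ι) F

lemma etaF_app (F : CohTuple (n + 1) ⥤ CohSpace) {X Y : CohTuple n} (ι : X ⟶ Y)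
    (Z : CohTuple 1) : (etaF F ι).app Z = F.map (extPi ι Z) := rfl

lemma etaF_id (F : CohTuple (n + 1) ⥤ CohSpace) (X : CohTuple n) :
    etaF F (𝟙 X) = 𝟙 (partialApp F X) := by
  apply NatTrans.ext
  funext Z
  show F.map (extPi (𝟙 X) Z) = 𝟙 _
  rw [extPi_id]
  exact F.map_id _

lemma etaF_comp (F : CohTuple (n + 1) ⥤ CohSpace) {X Y W : CohTuple n} (ι : X ⟶ Y)
    (κ : Y ⟶ W) : etaF F (ι ≫ κ) = etaF F ι ≫ etaF F κ := by
  apply NatTrans.ext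
  funext Z
  show F.map (extPi (ι ≫ κ) Z) = F.map (extPi ι Z) ≫ F.map (extPi κ Z)
  rw [extPi_comp, F.map_comp]

open CategoryTheory.Limits in
/-- `extPi` of an elementwise pullback square is a pullback in `CohTuple (n + 1)`. -/
lemma isPullback_extPi {P A B C : CohTuple n} {p1 : P ⟶ A} {p2 : P ⟶ B} {a : A ⟶ C}
    {b : B ⟶ C} (comm : p1 ≫ a = p2 ≫ b) (h : ∀ i, ElemPB (p1 i) (p2 i) (a i) (b i))
    (Z : CohTuple 1) :
    IsPullback (extPi p1 Z) (extPi p2 Z) (extPi a Z) (extPi b Z) := by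
  apply isPullback_pi (by rw [← extPi_comp, ← extPi_comp, comm])
  intro i
  by_cases hi : (i : ℕ) < n
  · refine (h ⟨i, hi⟩).conj (eqToHom (gfam_obj_lt hi Z)) (eqToHom (gfam_obj_lt hi Z))
      (eqToHom (gfam_obj_lt hi Z)) (eqToHom (gfam_obj_lt hi Z)) (eqToHom_bij _)
      (eqToHom_bij _) (eqToHom_bij _) ?_ ?_ ?_ ?_ <;>
    · show myExt _ Z i ≫ _ = _
      rw [myExt_lt _ _ hi]
      exact eqToHom_sandwich
  · have base : ElemPB (𝟙 (Z 0)) (𝟙 (Z 0)) (𝟙 (Z 0)) (𝟙 (Z 0)) := elemPB_id (𝟙 (Z 0))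
    refine base.conj (eqToHom (gfam_obj_ge hi Z)) (eqToHom (gfam_obj_ge hi Z))
      (eqToHom (gfam_obj_ge hi Z)) (eqToHom (gfam_obj_ge hi Z)) (eqToHom_bij _)
      (eqToHom_bij _) (eqToHom_bij _) ?_ ?_ ?_ ?_ <;>
    · show myExt _ Z i ≫ _ = _
      rw [myExt_ge _ _ hi]
      simp
      exact eqToHom_trans _ _

open CategoryTheory.Limits in
/-- The naturality square of `extPi` along `ι` and `u` is a pullback. -/
lemma isPullback_extNat {X Y : CohTuple n} (ι : X ⟶ Y) {W Z : CohTuple 1} (u : W ⟶ Z) :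
    IsPullback (extPi ι W) ((Functor.pi' (gfam X)).map u) ((Functor.pi' (gfam Y)).map u)
      (extPi ι Z) := by
  apply isPullback_pi (extPi_natural ι u).symm
  intro i
  by_cases hi : (i : ℕ) < n
  · refine (elemPB_id (ι ⟨i, hi⟩)).conj (eqToHom (gfam_obj_lt hi W))
      (eqToHom (gfam_obj_lt hi W)) (eqToHom (gfam_obj_lt hi Z)) (eqToHom (gfam_obj_lt hi Z))
      (eqToHom_bij _) (eqToHom_bij _) (eqToHom_bij _) ?_ ?_ ?_ ?_
    · show myExt _ W i ≫ _ = _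
      rw [myExt_lt _ _ hi]; exact eqToHom_sandwich
    · show (gfam X i).map u ≫ _ = _
      rw [gfam_map_lt hi u]; simp; exact eqToHom_trans _ _
    · show (gfam Y i).map u ≫ _ = _
      rw [gfam_map_lt hi u]; simp; exact eqToHom_trans _ _
    · show myExt _ Z i ≫ _ = _
      rw [myExt_lt _ _ hi]; exact eqToHom_sandwich
  · refine (elemPB_id' (u 0)).conj (eqToHom (gfam_obj_ge hi W))
      (eqToHom (gfam_obj_ge hi W)) (eqToHom (gfam_obj_ge hi Z)) (eqToHom (gfam_obj_ge hi Z))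
      (eqToHom_bij _) (eqToHom_bij _) (eqToHom_bij _) ?_ ?_ ?_ ?_
    · show myExt _ W i ≫ _ = _
      rw [myExt_ge _ _ hi]; simp; exact eqToHom_trans _ _
    · show (gfam X i).map u ≫ _ = _
      rw [gfam_map_ge hi u]; exact eqToHom_sandwich
    · show (gfam Y i).map u ≫ _ = _
      rw [gfam_map_ge hi u]; exact eqToHom_sandwich
    · show myExt _ Z i ≫ _ = _
      rw [myExt_ge _ _ hi]; simp; exact eqToHom_trans _ _

end Ext

/-! ### Normal forms and the trace map -/

section NF

variable {m : ℕ} {H H' : CohTuple m ⥤ CohSpace}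

/-- A cartesian natural transformation (elementwise). -/
def CartNT (η : H ⟶ H') : Prop :=
  ∀ {W Z : CohTuple m} (u : W ⟶ Z) (w : (H'.obj W).web) (x : (H.obj Z).web),
    (H'.map u).toFun w = (η.app Z).toFun x →
      ∃ v : (H.obj W).web, (η.app W).toFun v = w ∧ (H.map u).toFun v = x

/-- The transported element of `El(|H'|)`. -/
def mapElts (η : H ⟶ H') (e : Elts H) : Elts H' := ⟨e.1, (η.app e.1).toFun e.2⟩

lemma elts_hom_prop {e f : Elts H} (u : e ⟶ f) : (H.map u.1).toFun e.2 = f.2 := u.2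

/-- Sections against a fixed morphism in the category of elements are unique. -/
lemma section_unique {e f : Elts H} (u : f ⟶ e) (v v' : e ⟶ f)
    (hv : v ≫ u = 𝟙 e) (hv' : v' ≫ u = 𝟙 e) : v = v' := by
  apply Subtype.ext
  funext i
  apply CohEmb.ext
  funext x
  apply (u.1 i).inj
  have h1 : (u.1 i).toFun ((v.1 i).toFun x) = x := by
    have := congrArg Subtype.val hv
    have h2 := toFun_congr (congrFun this i) x
    exact h2
  have h1' : (u.1 i).toFun ((v'.1 i).toFun x) = x := by
    have := congrArg Subtype.val hv'
    have h2 := toFun_congr (congrFun this i) x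
    exact h2
  rw [h1, h1']

lemma nf_of_sections {e : Elts H} (hfin : ∀ i, Finite (e.1 i).web)
    (h : ∀ (f : Elts H) (u : f ⟶ e), ∃ v : e ⟶ f, v ≫ u = 𝟙 e) : IsNormalForm e := by
  refine ⟨hfin, fun f u => ?_⟩
  obtain ⟨v, hv⟩ := h f u
  exact ⟨v, hv, fun v' hv' => section_unique u v' v hv' hv⟩

/-- Normal forms are preserved by cartesian natural transformations. -/
lemma nf_map (η : H ⟶ H') (hc : CartNT η) {e : Elts H} (he : IsNormalForm e) :
    IsNormalForm (mapElts η e) := by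
  refine nf_of_sections he.1 ?_
  rintro f ⟨u, hu⟩
  obtain ⟨v, hv1, hv2⟩ := hc u f.2 e.2 hu
  obtain ⟨⟨s, hs⟩, hsec, -⟩ := he.2 ⟨f.1, v⟩ ⟨u, hv2⟩
  refine ⟨⟨s, ?_⟩, ?_⟩
  · show (H'.map s).toFun ((η.app e.1).toFun e.2) = f.2
    have hnat := toFun_congr (η.naturality s) e.2
    simp only [comp_toFun'] at hnat
    have hs' : (H.map s).toFun e.2 = v := hs
    exact hnat.symm.trans ((congrArg _ hs').trans hv1)
  · apply Subtype.ext
    have h0 := congrArg Subtype.val hsec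
    exact h0

/-- Normal forms are reflected along natural transformations. -/
lemma nf_reflect (η : H ⟶ H') {e : Elts H} (hfin : ∀ i, Finite (e.1 i).web)
    (he' : IsNormalForm (mapElts η e)) : IsNormalForm e := by
  refine nf_of_sections hfin ?_
  rintro f ⟨u, hu⟩
  have hu' : (H'.map u).toFun ((η.app f.1).toFun f.2) = (η.app e.1).toFun e.2 := by
    have hnat := toFun_congr (η.naturality u) f.2
    replace hnat : (η.app e.1).toFun ((H.map u).toFun f.2)
        = (H'.map u).toFun ((η.app f.1).toFun f.2) := hnat
    rw [← hnat, show (H.map u).toFun f.2 = e.2 from hu]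
  obtain ⟨⟨s, hs⟩, hsec, -⟩ := he'.2 ⟨f.1, (η.app f.1).toFun f.2⟩ ⟨u, hu'⟩
  refine ⟨⟨s, ?_⟩, ?_⟩
  · apply (η.app f.1).inj
    have hnat := toFun_congr (η.naturality s) e.2
    simp only [comp_toFun'] at hnat
    have hs' : (H'.map s).toFun ((η.app e.1).toFun e.2) = (η.app f.1).toFun f.2 := hs
    exact hnat.trans hs'
  · apply Subtype.ext
    have h0 := congrArg Subtype.val hsec
    exact h0

/-- Coherence of normal forms transfers along natural transformations. -/
lemma nfcoh_map_iff (η : H ⟶ H') (e e' : Elts H) :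
    NFCoherent (mapElts η e) (mapElts η e') ↔ NFCoherent e e' := by
  constructor
  · intro h W ι κ
    have h1 := h W ι κ
    have hnat : (η.app W).toFun ((H.map ι).toFun e.2)
        = (H'.map ι).toFun ((η.app e.1).toFun e.2) := by
      exact toFun_congr (η.naturality ι) e.2
    have hnat' : (η.app W).toFun ((H.map κ).toFun e'.2)
        = (H'.map κ).toFun ((η.app e'.1).toFun e'.2) := by
      exact toFun_congr (η.naturality κ) e'.2
    apply ((η.app W).coh_iff _ _).2
    have h1' : (H'.obj W).coh ((H'.map ι).toFun ((η.app e.1).toFun e.2))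
        ((H'.map κ).toFun ((η.app e'.1).toFun e'.2)) := h1
    rw [← hnat, ← hnat'] at h1'
    exact h1'
  · intro h W ι κ
    have h1 := h W ι κ
    have hnat : (η.app W).toFun ((H.map ι).toFun e.2)
        = (H'.map ι).toFun ((η.app e.1).toFun e.2) := by
      exact toFun_congr (η.naturality ι) e.2
    have hnat' : (η.app W).toFun ((H.map κ).toFun e'.2)
        = (H'.map κ).toFun ((η.app e'.1).toFun e'.2) := by
      exact toFun_congr (η.naturality κ) e'.2
    show (H'.obj W).coh ((H'.map ι).toFun ((η.app e.1).toFun e.2))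
      ((H'.map κ).toFun ((η.app e'.1).toFun e'.2))
    rw [← hnat, ← hnat']
    exact ((η.app W).coh_iff _ _).1 h1

/-- Build an isomorphism in the category of elements. -/
def eltIso {e e' : Elts H} (ρ : e.1 ≅ e'.1) (hρ : (H.map ρ.hom).toFun e.2 = e'.2) :
    e ≅ e' where
  hom := ⟨ρ.hom, hρ⟩
  inv := ⟨ρ.inv, by
    apply (H.map ρ.hom).inj
    have h0 : (H.map ρ.inv ≫ H.map ρ.hom).toFun e'.2 = e'.2 := by
      rw [← H.map_comp, ρ.inv_hom_id, H.map_id]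
      rfl
    have h1 : (H.map ρ.hom).toFun ((H.map ρ.inv).toFun e'.2) = e'.2 := h0
    show (H.map ρ.hom).toFun ((H.map ρ.inv).toFun e'.2) = (H.map ρ.hom).toFun e.2
    rw [h1, hρ]⟩
  hom_inv_id := Subtype.ext ρ.hom_inv_id
  inv_hom_id := Subtype.ext ρ.inv_hom_id

/-- The underlying isomorphism of an isomorphism in the category of elements. -/
def eltIsoBase {e e' : Elts H} (σ : e ≅ e') : e.1 ≅ e'.1 where
  hom := σ.hom.1
  inv := σ.inv.1
  hom_inv_id := congrArg Subtype.val σ.hom_inv_id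
  inv_hom_id := congrArg Subtype.val σ.inv_hom_id

lemma eltIsoBase_prop {e e' : Elts H} (σ : e ≅ e') :
    (H.map σ.hom.1).toFun e.2 = e'.2 := σ.hom.2

/-- Transport of isomorphisms of elements along a natural transformation. -/
def mapEltsIso (η : H ⟶ H') {e e' : Elts H} (σ : e ≅ e') : mapElts η e ≅ mapElts η e' :=
  eltIso (H := H') (e := mapElts η e) (e' := mapElts η e')
    (eltIsoBase (e := e) (e' := e') σ) (by
    show (H'.map σ.hom.1).toFun ((η.app e.1).toFun e.2) = (η.app e'.1).toFun e'.2
    have hnat : (η.app e'.1).toFun ((H.map σ.hom.1).toFun e.2)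
        = (H'.map σ.hom.1).toFun ((η.app e.1).toFun e.2) := by
      exact toFun_congr (η.naturality σ.hom.1) e.2
    have hh : (H.map σ.hom.1).toFun e.2 = e'.2 := σ.hom.2
    rw [← hnat, hh])

lemma nfcoh_symm {e e' : Elts H} (h : NFCoherent e e') : NFCoherent e' e :=
  fun W ι κ => (H.obj W).symm (h W κ ι)

lemma nfcoh_iso_left {e₁ e₂ f : Elts H} (σ : e₁ ≅ e₂) (h : NFCoherent e₂ f) :
    NFCoherent e₁ f := by
  intro W ι κ
  have h1 := h W (σ.inv.1 ≫ ι) κ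
  have hi : (H.map σ.inv.1).toFun e₂.2 = e₁.2 := σ.inv.2
  have h2 : (H.map (σ.inv.1 ≫ ι)).toFun e₂.2 = (H.map ι).toFun e₁.2 := by
    rw [H.map_comp]
    exact congrArg (H.map ι).toFun hi
  rw [h2] at h1
  exact h1

lemma nfcoh_iso_right {e f₁ f₂ : Elts H} (σ : f₁ ≅ f₂) (h : NFCoherent e f₂) :
    NFCoherent e f₁ :=
  nfcoh_symm (nfcoh_iso_left σ (nfcoh_symm h))

/-- Transport of canonical normal forms along a cartesian natural transformation. -/
def mapCanon (η : H ⟶ H') (hc : CartNT η) (c : CanonNF H) : CanonNF H' :=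
  ⟨c.1, ⟨(η.app (canonTuple c.1)).toFun c.2.1,
    nf_map η hc c.2.2.1, (nfcoh_map_iff η _ _).2 c.2.2.2⟩⟩

lemma mapCanon_toElts (η : H ⟶ H') (hc : CartNT η) (c : CanonNF H) :
    (mapCanon η hc c).toElts = mapElts η c.toElts := rfl

lemma mapCanon_resp (η : H ⟶ H') (hc : CartNT η) {c c' : CanonNF H}
    (h : (traceSetoid H).r c c') : (traceSetoid H').r (mapCanon η hc c) (mapCanon η hc c') := by
  obtain ⟨σ⟩ := h
  exact ⟨mapEltsIso η σ⟩

/-- The action of a cartesian natural transformation on traces. -/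
def TrMap (η : H ⟶ H') (hc : CartNT η) : Tr H ⟶ Tr H' where
  toFun := Quotient.map (mapCanon η hc) (fun _ _ h => mapCanon_resp η hc h)
  inj := by
    intro q q' h
    obtain ⟨c, rfl⟩ := Quotient.exists_rep q
    obtain ⟨c', rfl⟩ := Quotient.exists_rep q'
    have h' : (traceSetoid H').r (mapCanon η hc c) (mapCanon η hc c') := Quotient.exact h
    obtain ⟨σ⟩ := h'
    apply Quotient.sound
    refine ⟨eltIso (e := c.toElts) (e' := c'.toElts)
      (eltIsoBase (e := (mapCanon η hc c).toElts) (e' := (mapCanon η hc c').toElts) σ) ?_⟩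
    apply (η.app (canonTuple c'.1)).inj
    have hnat : (η.app (canonTuple c'.1)).toFun ((H.map σ.hom.1).toFun c.2.1)
        = (H'.map σ.hom.1).toFun ((η.app (canonTuple c.1)).toFun c.2.1) := by
      exact toFun_congr (η.naturality σ.hom.1) c.2.1
    have hh : (H'.map σ.hom.1).toFun ((η.app (canonTuple c.1)).toFun c.2.1)
        = (η.app (canonTuple c'.1)).toFun c'.2.1 := σ.hom.2
    show (η.app (canonTuple c'.1)).toFun ((H.map σ.hom.1).toFun c.2.1)
      = (η.app (canonTuple c'.1)).toFun c'.2.1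
    rw [hnat, hh]
  coh_iff := by
    intro q q'
    constructor
    · rintro ⟨c, c', rfl, rfl, hcoh⟩
      exact ⟨mapCanon η hc c, mapCanon η hc c', rfl, rfl, (nfcoh_map_iff η _ _).2 hcoh⟩
    · rintro ⟨b, b', hb, hb', hcoh⟩
      obtain ⟨c, rfl⟩ := Quotient.exists_rep q
      obtain ⟨c', rfl⟩ := Quotient.exists_rep q'
      have e1 : (traceSetoid H').r b (mapCanon η hc c) := Quotient.exact hb
      have e2 : (traceSetoid H').r b' (mapCanon η hc c') := Quotient.exact hb'
      obtain ⟨σ1⟩ := e1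
      obtain ⟨σ2⟩ := e2
      have hcoh2 : NFCoherent (mapCanon η hc c).toElts (mapCanon η hc c').toElts :=
        nfcoh_iso_left σ1.symm (nfcoh_iso_right σ2.symm hcoh)
      exact ⟨c, c', rfl, rfl, (nfcoh_map_iff η _ _).1 hcoh2⟩

lemma TrMap_mk (η : H ⟶ H') (hc : CartNT η) (c : CanonNF H) :
    (TrMap η hc).toFun (Quotient.mk _ c) = Quotient.mk _ (mapCanon η hc c) := rfl

lemma TrMap_id (hc : CartNT (𝟙 H)) : TrMap (𝟙 H) hc = 𝟙 (Tr H) := by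
  apply CohEmb.ext
  funext q
  obtain ⟨c, rfl⟩ := Quotient.exists_rep q
  show Quotient.mk _ (mapCanon (𝟙 H) hc c) = Quotient.mk _ c
  rfl

lemma TrMap_comp {H'' : CohTuple m ⥤ CohSpace} (η : H ⟶ H') (η' : H' ⟶ H'')
    (hc : CartNT η) (hc' : CartNT η') (hcc : CartNT (η ≫ η')) :
    TrMap (η ≫ η') hcc = TrMap η hc ≫ TrMap η' hc' := by
  apply CohEmb.ext
  funext q
  obtain ⟨c, rfl⟩ := Quotient.exists_rep q
  show Quotient.mk _ (mapCanon (η ≫ η') hcc c)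
    = Quotient.mk _ (mapCanon η' hc' (mapCanon η hc c))
  rfl

end NF

/-! ### The functor `∀(F)` -/

section Forall

open CategoryTheory.Limits

lemma cart_id {m : ℕ} {H : CohTuple m ⥤ CohSpace} : CartNT (𝟙 H) := by
  intro W Z u w x h
  exact ⟨w, rfl, h⟩

lemma cart_comp {m : ℕ} {H H' H'' : CohTuple m ⥤ CohSpace} {η : H ⟶ H'} {η' : H' ⟶ H''}
    (hc : CartNT η) (hc' : CartNT η') : CartNT (η ≫ η') := by
  intro W Z u w x h
  have h' : (H''.map u).toFun w = (η'.app Z).toFun ((η.app Z).toFun x) := h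
  obtain ⟨v', hv'1, hv'2⟩ := hc' u w ((η.app Z).toFun x) h'
  obtain ⟨v, hv1, hv2⟩ := hc u v' x hv'2
  refine ⟨v, ?_, hv2⟩
  show (η'.app W).toFun ((η.app W).toFun v) = w
  rw [hv1, hv'1]

lemma TrMap_congr {m : ℕ} {H H' : CohTuple m ⥤ CohSpace} {η η' : H ⟶ H'} (h : η = η')
    (hc : CartNT η) (hc' : CartNT η') : TrMap η hc = TrMap η' hc' := by
  subst h; rfl

variable {n : ℕ} (F : CohTuple (n + 1) ⥤ CohSpace)

lemma cart_etaF [PreservesLimitsOfShape WalkingCospan F] {X Y : CohTuple n} (ι : X ⟶ Y) :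
    CartNT (etaF F ι) := by
  intro W Z u w x h
  have hPB := (isPullback_extNat ι u).map F
  have he := elemPB_of_isPullback hPB
  obtain ⟨v, ⟨hv1, hv2⟩, -⟩ := he w x h
  exact ⟨v, hv1, hv2⟩

/-- The functor `∀(F)`. -/
def Gfun [PreservesLimitsOfShape WalkingCospan F] : CohTuple n ⥤ CohSpace where
  obj X := Tr (partialApp F X)
  map {X Y} ι := TrMap (etaF F ι) (cart_etaF F ι)
  map_id X := by
    show TrMap (etaF F (𝟙 X)) (cart_etaF F (𝟙 X)) = 𝟙 (Tr (partialApp F X))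
    rw [TrMap_congr (etaF_id F X) (cart_etaF F (𝟙 X)) cart_id]
    exact TrMap_id cart_id
  map_comp {X Y W} ι κ := by
    show TrMap (etaF F (ι ≫ κ)) (cart_etaF F (ι ≫ κ))
      = TrMap (etaF F ι) (cart_etaF F ι) ≫ TrMap (etaF F κ) (cart_etaF F κ)
    rw [TrMap_congr (etaF_comp F ι κ) (cart_etaF F (ι ≫ κ))
      (cart_comp (cart_etaF F ι) (cart_etaF F κ))]
    exact TrMap_comp _ _ (cart_etaF F ι) (cart_etaF F κ) _

end Forall

/-! ### `∀(F)` preserves pullbacks -/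

section GPull

open CategoryTheory.Limits

variable {n : ℕ} (F : CohTuple (n + 1) ⥤ CohSpace)
  [PreservesLimitsOfShape WalkingCospan F]
  {A B C : CohTuple n} (f : A ⟶ C) (g : B ⟶ C)

/-- The concrete pullback in `CohTuple n`. -/
def pbT : CohTuple n := fun i => pbCoh (f i) (g i)

def fstT : pbT f g ⟶ A := fun i => pbFst (f i) (g i)

def sndT : pbT f g ⟶ B := fun i => pbSnd (f i) (g i)

lemma commT : fstT f g ≫ f = sndT f g ≫ g := funext fun i => pbComm (f i) (g i)

lemma elemT : ∀ i, ElemPB (fstT f g i) (sndT f g i) (f i) (g i) := fun i => pbElem _ _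

lemma isPullbackT : IsPullback (fstT f g) (sndT f g) f g :=
  isPullback_pi (commT f g) (elemT f g)

lemma lift_exists (q₁ : (Tr (partialApp F A)).web) (q₂ : (Tr (partialApp F B)).web)
    (h : (TrMap (etaF F f) (cart_etaF F f)).toFun q₁
      = (TrMap (etaF F g) (cart_etaF F g)).toFun q₂) :
    ∃ r : (Tr (partialApp F (pbT f g))).web,
      (TrMap (etaF F (fstT f g)) (cart_etaF F (fstT f g))).toFun r = q₁ ∧
      (TrMap (etaF F (sndT f g)) (cart_etaF F (sndT f g))).toFun r = q₂ := by
  obtain ⟨c, rfl⟩ := Quotient.exists_rep q₁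
  obtain ⟨c', rfl⟩ := Quotient.exists_rep q₂
  have hex : (traceSetoid (partialApp F C)).r (mapCanon (etaF F f) (cart_etaF F f) c)
      (mapCanon (etaF F g) (cart_etaF F g) c') := Quotient.exact h
  obtain ⟨σ⟩ := hex
  have hσ : ((partialApp F C).map σ.hom.1).toFun
      (((etaF F f).app (canonTuple c.1)).toFun c.2.1)
      = ((etaF F g).app (canonTuple c'.1)).toFun c'.2.1 := σ.hom.2
  -- the transported point over (A, Z')
  set x'' : ((partialApp F A).obj (canonTuple c'.1)).web
    := ((partialApp F A).map σ.hom.1).toFun c.2.1 with hx''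
  have hnat : ((etaF F f).app (canonTuple c'.1)).toFun x''
      = ((etaF F g).app (canonTuple c'.1)).toFun c'.2.1 := by
    have h0 : ((partialApp F A).map σ.hom.1 ≫ (etaF F f).app (canonTuple c'.1)).toFun c.2.1
        = ((etaF F f).app (canonTuple c.1) ≫ (partialApp F C).map σ.hom.1).toFun c.2.1 :=
      toFun_congr ((etaF F f).naturality σ.hom.1) c.2.1
    replace h0 : ((etaF F f).app (canonTuple c'.1)).toFun (((partialApp F A).map σ.hom.1).toFun c.2.1)
        = ((partialApp F C).map σ.hom.1).toFun (((etaF F f).app (canonTuple c.1)).toFun c.2.1) := h0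
    rw [hx'', h0, hσ]
  -- the pullback square over Z'
  have hPB := (isPullback_extPi (commT f g) (elemT f g) (canonTuple c'.1)).map F
  have he := elemPB_of_isPullback hPB
  obtain ⟨v, ⟨hv1, hv2⟩, -⟩ := he x'' c'.2.1 hnat
  -- v is a canonical normal form over the pullback tuple
  have hfin : ∀ i, Finite ((canonTuple c'.1) i).web := c'.2.2.1.1
  have hmapel : mapElts (etaF F (sndT f g)) ⟨canonTuple c'.1, v⟩
      = (⟨canonTuple c'.1, c'.2.1⟩ : Elts (partialApp F B)) := by
    have : ((etaF F (sndT f g)).app (canonTuple c'.1)).toFun v = c'.2.1 := hv2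
    exact congrArg (Sigma.mk (canonTuple c'.1)) this
  have hnf : IsNormalForm (F := partialApp F (pbT f g)) ⟨canonTuple c'.1, v⟩ := by
    apply nf_reflect (etaF F (sndT f g)) hfin
    rw [hmapel]
    exact c'.2.2.1
  have hcoh : NFCoherent (F := partialApp F (pbT f g)) ⟨canonTuple c'.1, v⟩
      ⟨canonTuple c'.1, v⟩ := by
    apply (nfcoh_map_iff (etaF F (sndT f g)) _ _).1
    rw [hmapel]
    exact c'.2.2.2
  set cP : CanonNF (partialApp F (pbT f g)) := ⟨c'.1, ⟨v, hnf, hcoh⟩⟩ with hcP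
  refine ⟨Quotient.mk _ cP, ?_, ?_⟩
  · show Quotient.mk _ (mapCanon (etaF F (fstT f g)) (cart_etaF F (fstT f g)) cP)
      = Quotient.mk _ c
    apply Quotient.sound
    refine ⟨eltIso (e := (mapCanon (etaF F (fstT f g)) (cart_etaF F (fstT f g)) cP).toElts)
      (e' := c.toElts)
      (Iso.symm (eltIsoBase (e := (mapCanon (etaF F f) (cart_etaF F f) c).toElts)
        (e' := (mapCanon (etaF F g) (cart_etaF F g) c').toElts) σ)) ?_⟩
    show ((partialApp F A).map σ.inv.1).toFun
      (((etaF F (fstT f g)).app (canonTuple c'.1)).toFun v) = c.2.1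
    have hv1' : ((etaF F (fstT f g)).app (canonTuple c'.1)).toFun v = x'' := hv1
    rw [hv1', hx'']
    have h0 : ((partialApp F A).map σ.hom.1 ≫ (partialApp F A).map σ.inv.1).toFun c.2.1
        = c.2.1 := by
      rw [← Functor.map_comp]
      have hid : (σ.hom.1 ≫ σ.inv.1) = 𝟙 (canonTuple c.1) := congrArg Subtype.val σ.hom_inv_id
      rw [hid]
      exact toFun_congr ((partialApp F A).map_id (canonTuple c.1)) c.2.1
    exact h0
  · show Quotient.mk _ (mapCanon (etaF F (sndT f g)) (cart_etaF F (sndT f g)) cP)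
      = Quotient.mk _ c'
    apply congrArg
    refine Sigma.ext rfl (heq_of_eq (Subtype.ext ?_))
    show ((etaF F (sndT f g)).app (canonTuple c'.1)).toFun v = c'.2.1
    exact hv2

/-- `∀(F)` preserves the concrete pullback cone. -/
noncomputable def gPreservesPB : IsLimit (PullbackCone.mk ((Gfun F).map (fstT f g))
    ((Gfun F).map (sndT f g))
    (by rw [← Functor.map_comp, ← Functor.map_comp, commT])) := by
  have spec : ∀ (s : PullbackCone ((Gfun F).map f) ((Gfun F).map g)) (a : s.pt.web),
      (TrMap (etaF F f) (cart_etaF F f)).toFun (s.fst.toFun a)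
        = (TrMap (etaF F g) (cart_etaF F g)).toFun (s.snd.toFun a) := by
    intro s a
    have h0 := toFun_congr s.condition a
    exact h0
  refine PullbackCone.IsLimit.mk _
    (fun s =>
      { toFun := fun a => (lift_exists F f g (s.fst.toFun a) (s.snd.toFun a) (spec s a)).choose
        inj := by
          intro a a' hq
          apply s.fst.inj
          rw [← (lift_exists F f g (s.fst.toFun a) (s.snd.toFun a) (spec s a)).choose_spec.1,
            ← (lift_exists F f g (s.fst.toFun a') (s.snd.toFun a') (spec s a')).choose_spec.1]
          exact congrArg _ hq
        coh_iff := by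
          intro a a'
          rw [s.fst.coh_iff a a']
          have h3 := (TrMap (etaF F (fstT f g)) (cart_etaF F (fstT f g))).coh_iff
            (lift_exists F f g (s.fst.toFun a) (s.snd.toFun a) (spec s a)).choose
            (lift_exists F f g (s.fst.toFun a') (s.snd.toFun a') (spec s a')).choose
          rw [(lift_exists F f g (s.fst.toFun a) (s.snd.toFun a) (spec s a)).choose_spec.1,
            (lift_exists F f g (s.fst.toFun a') (s.snd.toFun a') (spec s a')).choose_spec.1] at h3
          exact h3.symm })
    (fun s => by
      apply CohEmb.ext
      funext a
      exact (lift_exists F f g (s.fst.toFun a) (s.snd.toFun a) (spec s a)).choose_spec.1)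
    (fun s => by
      apply CohEmb.ext
      funext a
      exact (lift_exists F f g (s.fst.toFun a) (s.snd.toFun a) (spec s a)).choose_spec.2)
    (fun s mm h₁ h₂ => by
      apply CohEmb.ext
      funext a
      apply (TrMap (etaF F (sndT f g)) (cart_etaF F (sndT f g))).inj
      have e1 : (TrMap (etaF F (sndT f g)) (cart_etaF F (sndT f g))).toFun (mm.toFun a)
          = s.snd.toFun a := by
        have h0 := toFun_congr h₂ a
        exact h0
      rw [e1]
      exact ((lift_exists F f g (s.fst.toFun a) (s.snd.toFun a) (spec s a)).choose_spec.2).symm)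

lemma gPreservesLimitsOfShape : PreservesLimitsOfShape WalkingCospan (Gfun F) := by
  constructor
  intro K
  have : ∀ {A B C : CohTuple n} (f : A ⟶ C) (g : B ⟶ C),
      PreservesLimit (cospan f g) (Gfun F) := by
    intro A B C f g
    exact preservesLimit_of_preserves_limit_cone (isPullbackT f g).isLimit
      ((isLimitMapConePullbackConeEquiv (Gfun F) (isPullbackT f g).w).symm (gPreservesPB F f g))
  have h1 := this (K.map WalkingCospan.Hom.inl) (K.map WalkingCospan.Hom.inr)
  exact preservesLimit_of_iso_diagram (Gfun F) (diagramIsoCospan K).symm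

end GPull

/-! ### `∀(F)` preserves filtered colimits -/

section GFilt

open CategoryTheory.Limits

variable {n : ℕ} (F : CohTuple (n + 1) ⥤ CohSpace)
  [PreservesLimitsOfShape WalkingCospan F] [PreservesFilteredColimits F]
  {J : Type} [SmallCategory J] [IsFiltered J] (K : J ⥤ CohTuple n)

/-- The concrete filtered colimit in `CohTuple n`. -/
def colimT : CohTuple n := fun i => filtColim (K ⋙ CategoryTheory.Pi.eval _ i)

/-- The concrete colimit cocone in `CohTuple n`. -/
def colimCocone : Cocone K where
  pt := colimT K
  ι :=
    { app := fun j => fun i => filtIns (K ⋙ CategoryTheory.Pi.eval _ i) j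
      naturality := fun j l u => by
        funext i
        show (K.map u) i ≫ filtIns (K ⋙ CategoryTheory.Pi.eval _ i) l
          = filtIns (K ⋙ CategoryTheory.Pi.eval _ i) j ≫ 𝟙 _
        rw [Category.comp_id]
        exact filtIns_w (K ⋙ CategoryTheory.Pi.eval _ i) u }

/-- The concrete cocone is a colimit. -/
noncomputable def colimIsColimit : IsColimit (colimCocone K) :=
  piIsColimit _ (fun i => IsColimit.ofIsoColimit (filtIsColimit (K ⋙ CategoryTheory.Pi.eval _ i))
    (Cocones.ext (Iso.refl _) (fun j => by
      show filtIns (K ⋙ CategoryTheory.Pi.eval _ i) j ≫ 𝟙 _ = _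
      rw [Category.comp_id]
      rfl)))

variable (Z : CohTuple 1)

/-- The diagram `j ↦ (K j, Z)` in `CohTuple (n + 1)`. -/
def EKZ : J ⥤ CohTuple (n + 1) where
  obj j := (Functor.pi' (gfam (K.obj j))).obj Z
  map u := extPi (K.map u) Z
  map_id j := by
    show extPi (K.map (𝟙 j)) Z = 𝟙 _
    rw [K.map_id, extPi_id]
  map_comp u v := by
    show extPi (K.map (u ≫ v)) Z = extPi (K.map u) Z ≫ extPi (K.map v) Z
    rw [K.map_comp, extPi_comp]

/-- The cocone over `EKZ` with apex `(colim K, Z)`. -/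
def EKcocone : Cocone (EKZ K Z) where
  pt := (Functor.pi' (gfam (colimT K))).obj Z
  ι :=
    { app := fun j => extPi ((colimCocone K).ι.app j) Z
      naturality := fun j l u => by
        show extPi (K.map u) Z ≫ extPi ((colimCocone K).ι.app l) Z
          = extPi ((colimCocone K).ι.app j) Z ≫ 𝟙 _
        rw [Category.comp_id, ← extPi_comp, (colimCocone K).w u] }

/-- The cocone `EKcocone` is a colimit. -/
noncomputable def EKIsColimit : IsColimit (EKcocone K Z) := by
  apply piIsColimit
  intro i
  by_cases hi : (i : ℕ) < n
  · refine colimitConj (filtIsColimit (K ⋙ CategoryTheory.Pi.eval _ ⟨i, hi⟩)) _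
      (fun j => eqToIso (show (EKZ K Z ⋙ CategoryTheory.Pi.eval _ i).obj j
        = (K ⋙ CategoryTheory.Pi.eval _ ⟨i, hi⟩).obj j from gfam_obj_lt hi Z))
      (fun {j l} u => ?_)
      (eqToIso (show ((CategoryTheory.Pi.eval _ i).mapCocone (EKcocone K Z)).pt
        = (filtCocone (K ⋙ CategoryTheory.Pi.eval _ ⟨i, hi⟩)).pt from gfam_obj_lt hi Z))
      (fun j => ?_)
    · show myExt (K.map u) Z i ≫ eqToHom (gfam_obj_lt hi Z)
        = eqToHom (gfam_obj_lt hi Z) ≫ (K.map u) ⟨i, hi⟩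
      rw [myExt_lt _ _ hi]
      simp
    · show myExt ((colimCocone K).ι.app j) Z i ≫ eqToHom (gfam_obj_lt hi Z)
        = eqToHom (gfam_obj_lt hi Z) ≫ filtIns (K ⋙ CategoryTheory.Pi.eval _ ⟨i, hi⟩) j
      rw [myExt_lt _ _ hi]
      simp
      rfl
  · refine colimitConj (constIsColimit (Z 0)) _
      (fun j => eqToIso (show (EKZ K Z ⋙ CategoryTheory.Pi.eval _ i).obj j
        = ((Functor.const J).obj (Z 0)).obj j from gfam_obj_ge hi Z))
      (fun {j l} u => ?_)
      (eqToIso (show ((CategoryTheory.Pi.eval _ i).mapCocone (EKcocone K Z)).pt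
        = (constCocone (Z 0)).pt from gfam_obj_ge hi Z))
      (fun j => ?_)
    · show myExt (K.map u) Z i ≫ eqToHom (gfam_obj_ge hi Z)
        = eqToHom (gfam_obj_ge hi Z) ≫ 𝟙 (Z 0)
      rw [myExt_ge _ _ hi]
      simp
    · show myExt ((colimCocone K).ι.app j) Z i ≫ eqToHom (gfam_obj_ge hi Z)
        = eqToHom (gfam_obj_ge hi Z) ≫ 𝟙 (Z 0)
      rw [myExt_ge _ _ hi]
      simp

lemma gstage_surj (x : (F.obj ((Functor.pi' (gfam (colimT K))).obj Z)).web) :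
    ∃ (j : J) (y : (F.obj ((Functor.pi' (gfam (K.obj j))).obj Z)).web),
      (F.map (extPi ((colimCocone K).ι.app j) Z)).toFun y = x :=
  stage_surj (EKZ K Z ⋙ F) (isColimitOfPreserves F (EKIsColimit K Z)) x

lemma gstage_eq {j k : J} {y : (F.obj ((Functor.pi' (gfam (K.obj j))).obj Z)).web}
    {z : (F.obj ((Functor.pi' (gfam (K.obj k))).obj Z)).web}
    (h : (F.map (extPi ((colimCocone K).ι.app j) Z)).toFun y
      = (F.map (extPi ((colimCocone K).ι.app k) Z)).toFun z) :
    ∃ (l : J) (u : j ⟶ l) (v : k ⟶ l),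
      (F.map (extPi (K.map u) Z)).toFun y = (F.map (extPi (K.map v) Z)).toFun z :=
  stage_eq (EKZ K Z ⋙ F) (isColimitOfPreserves F (EKIsColimit K Z)) h

end GFilt

section GFilt2

open CategoryTheory.Limits

variable {n : ℕ} (F : CohTuple (n + 1) ⥤ CohSpace)
  [PreservesLimitsOfShape WalkingCospan F] [PreservesFilteredColimits F]

lemma eta_comp_toFun {X Y W : CohTuple n} (ι : X ⟶ Y) (κ : Y ⟶ W) (Z : CohTuple 1)
    (x : ((partialApp F X).obj Z).web) :
    ((etaF F (ι ≫ κ)).app Z).toFun x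
      = ((etaF F κ).app Z).toFun (((etaF F ι).app Z).toFun x) :=
  toFun_congr (congrArg (fun η => η.app Z) (etaF_comp F ι κ)) x

/-- Pulling a canonical normal form back along an embedding. -/
def pullCanon {X Y : CohTuple n} (ι : X ⟶ Y) (c : CanonNF (partialApp F Y))
    (y : ((partialApp F X).obj (canonTuple c.1)).web)
    (hy : ((etaF F ι).app (canonTuple c.1)).toFun y = c.2.1) :
    CanonNF (partialApp F X) :=
  ⟨c.1, ⟨y, by
    apply nf_reflect (etaF F ι) c.2.2.1.1
    rw [show mapElts (etaF F ι) ⟨canonTuple c.1, y⟩ = c.toElts from congrArg (Sigma.mk _) hy]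
    exact c.2.2.1, by
    apply (nfcoh_map_iff (etaF F ι) _ _).1
    rw [show mapElts (etaF F ι) ⟨canonTuple c.1, y⟩ = c.toElts from congrArg (Sigma.mk _) hy]
    exact c.2.2.2⟩⟩

lemma mapCanon_pullCanon {X Y : CohTuple n} (ι : X ⟶ Y) (c : CanonNF (partialApp F Y))
    (y : ((partialApp F X).obj (canonTuple c.1)).web)
    (hy : ((etaF F ι).app (canonTuple c.1)).toFun y = c.2.1) :
    mapCanon (etaF F ι) (cart_etaF F ι) (pullCanon F ι c y hy) = c :=
  Sigma.ext rfl (heq_of_eq (Subtype.ext hy))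

variable {J : Type} [SmallCategory J] [IsFiltered J] (K : J ⥤ CohTuple n)

/-- The second component of the transport of a pulled normal form along a stage map. -/
lemma pull_push {j l : J} (u : j ⟶ l) (c : CanonNF (partialApp F (colimT K)))
    (y : ((partialApp F (K.obj j)).obj (canonTuple c.1)).web)
    (hy : ((etaF F ((colimCocone K).ι.app j)).app (canonTuple c.1)).toFun y = c.2.1) :
    ((etaF F ((colimCocone K).ι.app l)).app (canonTuple c.1)).toFun
      (((etaF F (K.map u)).app (canonTuple c.1)).toFun y) = c.2.1 := by
  rw [← eta_comp_toFun]
  rw [show K.map u ≫ (colimCocone K).ι.app l = (colimCocone K).ι.app j from (colimCocone K).w u]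
  exact hy

/-- The glued element-level equality: transported elements at stage `l`. -/
lemma glue_toElts {j l : J} (u : j ⟶ l) (c : CanonNF (partialApp F (colimT K)))
    (y : ((partialApp F (K.obj j)).obj (canonTuple c.1)).web)
    (hy : ((etaF F ((colimCocone K).ι.app j)).app (canonTuple c.1)).toFun y = c.2.1) :
    mapElts (etaF F ((colimCocone K).ι.app l))
      ((mapCanon (etaF F (K.map u)) (cart_etaF F (K.map u))
        (pullCanon F ((colimCocone K).ι.app j) c y hy)).toElts) = c.toElts :=
  congrArg (Sigma.mk (canonTuple c.1)) (pull_push F K u c y hy)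

/-- Gluing of isomorphism classes along stages. -/
lemma class_glue {c c' : CanonNF (partialApp F (colimT K))} {j k l : J}
    (u : j ⟶ l) (v : k ⟶ l)
    {y : ((partialApp F (K.obj j)).obj (canonTuple c.1)).web}
    {z : ((partialApp F (K.obj k)).obj (canonTuple c'.1)).web}
    (hy : ((etaF F ((colimCocone K).ι.app j)).app (canonTuple c.1)).toFun y = c.2.1)
    (hz : ((etaF F ((colimCocone K).ι.app k)).app (canonTuple c'.1)).toFun z = c'.2.1)
    (h : (traceSetoid (partialApp F (K.obj l))).r
      (mapCanon (etaF F (K.map u)) (cart_etaF F (K.map u))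
        (pullCanon F ((colimCocone K).ι.app j) c y hy))
      (mapCanon (etaF F (K.map v)) (cart_etaF F (K.map v))
        (pullCanon F ((colimCocone K).ι.app k) c' z hz))) :
    (traceSetoid (partialApp F (colimT K))).r c c' := by
  obtain ⟨σ0⟩ := h
  refine ⟨(eqToIso (glue_toElts F K u c y hy)).symm
    ≪≫ mapEltsIso (etaF F ((colimCocone K).ι.app l)) σ0
    ≪≫ eqToIso (glue_toElts F K v c' z hz)⟩

lemma nfcoh_glue {c c' : CanonNF (partialApp F (colimT K))} {j k l : J}
    (u : j ⟶ l) (v : k ⟶ l)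
    {y : ((partialApp F (K.obj j)).obj (canonTuple c.1)).web}
    {z : ((partialApp F (K.obj k)).obj (canonTuple c'.1)).web}
    (hy : ((etaF F ((colimCocone K).ι.app j)).app (canonTuple c.1)).toFun y = c.2.1)
    (hz : ((etaF F ((colimCocone K).ι.app k)).app (canonTuple c'.1)).toFun z = c'.2.1) :
    NFCoherent
      (mapCanon (etaF F (K.map u)) (cart_etaF F (K.map u))
        (pullCanon F ((colimCocone K).ι.app j) c y hy)).toElts
      (mapCanon (etaF F (K.map v)) (cart_etaF F (K.map v))
        (pullCanon F ((colimCocone K).ι.app k) c' z hz)).toElts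
      ↔ NFCoherent c.toElts c'.toElts := by
  rw [← nfcoh_map_iff (etaF F ((colimCocone K).ι.app l)),
    show mapElts (etaF F ((colimCocone K).ι.app l)) _ = c.toElts from glue_toElts F K u c y hy,
    show mapElts (etaF F ((colimCocone K).ι.app l)) _ = c'.toElts from glue_toElts F K v c' z hz]
  exact Iff.rfl

/-- Values of a cocone on pulled normal forms are independent of all choices. -/
lemma rawVal_eq (s : Cocone (K ⋙ Gfun F)) {c c' : CanonNF (partialApp F (colimT K))}
    (hcc : (traceSetoid (partialApp F (colimT K))).r c c') (j k : J)
    (y : ((partialApp F (K.obj j)).obj (canonTuple c.1)).web)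
    (z : ((partialApp F (K.obj k)).obj (canonTuple c'.1)).web)
    (hy : ((etaF F ((colimCocone K).ι.app j)).app (canonTuple c.1)).toFun y = c.2.1)
    (hz : ((etaF F ((colimCocone K).ι.app k)).app (canonTuple c'.1)).toFun z = c'.2.1) :
    (s.ι.app j).toFun (Quotient.mk _ (pullCanon F ((colimCocone K).ι.app j) c y hy))
      = (s.ι.app k).toFun (Quotient.mk _ (pullCanon F ((colimCocone K).ι.app k) c' z hz)) := by
  obtain ⟨σ⟩ := hcc
  -- transport y over the web of c'
  set y' : ((partialApp F (K.obj j)).obj (canonTuple c'.1)).web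
    := ((partialApp F (K.obj j)).map σ.hom.1).toFun y with hy'def
  have hy' : ((etaF F ((colimCocone K).ι.app j)).app (canonTuple c'.1)).toFun y' = c'.2.1 := by
    have hnat : ((etaF F ((colimCocone K).ι.app j)).app (canonTuple c'.1)).toFun
        (((partialApp F (K.obj j)).map σ.hom.1).toFun y)
        = ((partialApp F (colimT K)).map σ.hom.1).toFun
          (((etaF F ((colimCocone K).ι.app j)).app (canonTuple c.1)).toFun y) := by
      exact
        toFun_congr ((etaF F ((colimCocone K).ι.app j)).naturality σ.hom.1) y
    rw [hy'def, hnat, hy]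
    exact σ.hom.2
  have hclass : Quotient.mk (traceSetoid (partialApp F (K.obj j)))
      (pullCanon F ((colimCocone K).ι.app j) c y hy)
      = Quotient.mk _ (pullCanon F ((colimCocone K).ι.app j) c' y' hy') := by
    apply Quotient.sound
    exact ⟨eltIso (e := (pullCanon F ((colimCocone K).ι.app j) c y hy).toElts)
      (e' := (pullCanon F ((colimCocone K).ι.app j) c' y' hy').toElts)
      (eltIsoBase (e := c.toElts) (e' := c'.toElts) σ) hy'def.symm⟩
  rw [hclass]
  -- common stage
  have hst : (F.map (extPi ((colimCocone K).ι.app j) (canonTuple c'.1))).toFun y'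
      = (F.map (extPi ((colimCocone K).ι.app k) (canonTuple c'.1))).toFun z := by
    have h1 : (F.map (extPi ((colimCocone K).ι.app j) (canonTuple c'.1))).toFun y'
        = c'.2.1 := hy'
    have h2 : (F.map (extPi ((colimCocone K).ι.app k) (canonTuple c'.1))).toFun z
        = c'.2.1 := hz
    rw [h1, h2]
  obtain ⟨l, u, v, hw⟩ := gstage_eq F K (canonTuple c'.1) hst
  have e1 : (s.ι.app j).toFun
      (Quotient.mk _ (pullCanon F ((colimCocone K).ι.app j) c' y' hy'))
      = (s.ι.app l).toFun ((TrMap (etaF F (K.map u)) (cart_etaF F (K.map u))).toFun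
        (Quotient.mk _ (pullCanon F ((colimCocone K).ι.app j) c' y' hy'))) := by
    exact
      (toFun_congr (s.w u) (Quotient.mk _ (pullCanon F ((colimCocone K).ι.app j) c' y' hy'))).symm
  have e2 : (s.ι.app k).toFun
      (Quotient.mk _ (pullCanon F ((colimCocone K).ι.app k) c' z hz))
      = (s.ι.app l).toFun ((TrMap (etaF F (K.map v)) (cart_etaF F (K.map v))).toFun
        (Quotient.mk _ (pullCanon F ((colimCocone K).ι.app k) c' z hz))) := by
    exact
      (toFun_congr (s.w v) (Quotient.mk _ (pullCanon F ((colimCocone K).ι.app k) c' z hz))).symm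
  rw [e1, e2]
  apply congrArg
  show Quotient.mk _ (mapCanon (etaF F (K.map u)) (cart_etaF F (K.map u))
      (pullCanon F ((colimCocone K).ι.app j) c' y' hy'))
    = Quotient.mk _ (mapCanon (etaF F (K.map v)) (cart_etaF F (K.map v))
      (pullCanon F ((colimCocone K).ι.app k) c' z hz))
  apply congrArg
  refine Sigma.ext rfl (heq_of_eq (Subtype.ext ?_))
  exact hw

end GFilt2

section GFilt3

open CategoryTheory.Limits

variable {n : ℕ} (F : CohTuple (n + 1) ⥤ CohSpace)
  [PreservesLimitsOfShape WalkingCospan F] [PreservesFilteredColimits F]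
  {J : Type} [SmallCategory J] [IsFiltered J] (K : J ⥤ CohTuple n)

/-- A chosen stage for a canonical normal form over the colimit. -/
noncomputable def stJ (c : CanonNF (partialApp F (colimT K))) : J :=
  (gstage_surj F K (canonTuple c.1) c.2.1).choose

noncomputable def stY (c : CanonNF (partialApp F (colimT K))) :
    (F.obj ((Functor.pi' (gfam (K.obj (stJ F K c)))).obj (canonTuple c.1))).web :=
  (gstage_surj F K (canonTuple c.1) c.2.1).choose_spec.choose

lemma stSpec (c : CanonNF (partialApp F (colimT K))) :
    ((etaF F ((colimCocone K).ι.app (stJ F K c))).app (canonTuple c.1)).toFun (stY F K c)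
      = c.2.1 :=
  (gstage_surj F K (canonTuple c.1) c.2.1).choose_spec.choose_spec

/-- The underlying function of the descent morphism. -/
noncomputable def rawFun (s : Cocone (K ⋙ Gfun F)) (c : CanonNF (partialApp F (colimT K))) :
    s.pt.web :=
  (s.ι.app (stJ F K c)).toFun (Quotient.mk _
    (pullCanon F ((colimCocone K).ι.app (stJ F K c)) c (stY F K c) (stSpec F K c)))

lemma rawFun_stage (s : Cocone (K ⋙ Gfun F)) (c : CanonNF (partialApp F (colimT K)))
    (l : J) (u : stJ F K c ⟶ l) :
    rawFun F K s c = (s.ι.app l).toFun (Quotient.mk _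
      (mapCanon (etaF F (K.map u)) (cart_etaF F (K.map u))
        (pullCanon F ((colimCocone K).ι.app (stJ F K c)) c (stY F K c) (stSpec F K c)))) :=
  (toFun_congr (s.w u) (Quotient.mk _
    (pullCanon F ((colimCocone K).ι.app (stJ F K c)) c (stY F K c) (stSpec F K c)))).symm

/-- The descent embedding out of the trace of the colimit. -/
noncomputable def descEmb (s : Cocone (K ⋙ Gfun F)) :
    Tr (partialApp F (colimT K)) ⟶ s.pt where
  toFun := Quotient.lift (rawFun F K s) (fun c c' h =>
    rawVal_eq F K s h (stJ F K c) (stJ F K c') (stY F K c) (stY F K c')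
      (stSpec F K c) (stSpec F K c'))
  inj := by
    intro q q' h
    obtain ⟨c, rfl⟩ := Quotient.exists_rep q
    obtain ⟨c', rfl⟩ := Quotient.exists_rep q'
    have h' : rawFun F K s c = rawFun F K s c' := h
    rw [rawFun_stage F K s c _ (IsFiltered.leftToMax (stJ F K c) (stJ F K c')),
      rawFun_stage F K s c' _ (IsFiltered.rightToMax (stJ F K c) (stJ F K c'))] at h'
    have h2 := (s.ι.app (IsFiltered.max (stJ F K c) (stJ F K c'))).inj h'
    exact Quotient.sound (class_glue F K _ _ (stSpec F K c) (stSpec F K c')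
      (Quotient.exact h2))
  coh_iff := by
    intro q q'
    constructor
    · rintro ⟨b, b', rfl, rfl, hcoh⟩
      show s.pt.coh (rawFun F K s b) (rawFun F K s b')
      rw [rawFun_stage F K s b _ (IsFiltered.leftToMax (stJ F K b) (stJ F K b')),
        rawFun_stage F K s b' _ (IsFiltered.rightToMax (stJ F K b) (stJ F K b'))]
      apply ((s.ι.app (IsFiltered.max (stJ F K b) (stJ F K b'))).coh_iff _ _).1
      exact ⟨_, _, rfl, rfl,
        (nfcoh_glue F K _ _ (stSpec F K b) (stSpec F K b')).2 hcoh⟩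
    · intro h
      obtain ⟨c, rfl⟩ := Quotient.exists_rep q
      obtain ⟨c', rfl⟩ := Quotient.exists_rep q'
      have h' : s.pt.coh (rawFun F K s c) (rawFun F K s c') := h
      rw [rawFun_stage F K s c _ (IsFiltered.leftToMax (stJ F K c) (stJ F K c')),
        rawFun_stage F K s c' _ (IsFiltered.rightToMax (stJ F K c) (stJ F K c'))] at h'
      have h2 := ((s.ι.app (IsFiltered.max (stJ F K c) (stJ F K c'))).coh_iff _ _).2 h'
      obtain ⟨b, b', hb, hb', hcoh⟩ := h2
      obtain ⟨σ1⟩ := Quotient.exact hb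
      obtain ⟨σ2⟩ := Quotient.exact hb'
      have hcoh2 := nfcoh_iso_left σ1.symm (nfcoh_iso_right σ2.symm hcoh)
      exact ⟨c, c', rfl, rfl,
        (nfcoh_glue F K _ _ (stSpec F K c) (stSpec F K c')).1 hcoh2⟩

/-- `∀(F)` maps the concrete colimit cocone to a colimit cocone. -/
noncomputable def descIsColimit : IsColimit ((Gfun F).mapCocone (colimCocone K)) where
  desc s := descEmb F K s
  fac s j := by
    apply CohEmb.ext
    funext q
    obtain ⟨b, rfl⟩ := Quotient.exists_rep q
    exact rawVal_eq F K s ⟨Iso.refl _⟩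
      (stJ F K (mapCanon (etaF F ((colimCocone K).ι.app j))
        (cart_etaF F ((colimCocone K).ι.app j)) b)) j
      (stY F K _) b.2.1 (stSpec F K _) rfl
  uniq s m w := by
    apply CohEmb.ext
    funext q
    obtain ⟨c, rfl⟩ := Quotient.exists_rep q
    have hq : Quotient.mk (traceSetoid (partialApp F (colimT K))) c
        = (TrMap (etaF F ((colimCocone K).ι.app (stJ F K c)))
          (cart_etaF F ((colimCocone K).ι.app (stJ F K c)))).toFun (Quotient.mk _
            (pullCanon F ((colimCocone K).ι.app (stJ F K c)) c (stY F K c) (stSpec F K c))) := by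
      show Quotient.mk _ c = Quotient.mk _
        (mapCanon (etaF F ((colimCocone K).ι.app (stJ F K c)))
          (cart_etaF F ((colimCocone K).ι.app (stJ F K c)))
          (pullCanon F ((colimCocone K).ι.app (stJ F K c)) c (stY F K c) (stSpec F K c)))
      exact (congrArg (Quotient.mk _) (mapCanon_pullCanon ..)).symm
    have h1 := congrArg m.toFun hq
    have h2 : m.toFun ((TrMap (etaF F ((colimCocone K).ι.app (stJ F K c)))
        (cart_etaF F ((colimCocone K).ι.app (stJ F K c)))).toFun (Quotient.mk _
          (pullCanon F ((colimCocone K).ι.app (stJ F K c)) c (stY F K c) (stSpec F K c))))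
        = (s.ι.app (stJ F K c)).toFun (Quotient.mk _
          (pullCanon F ((colimCocone K).ι.app (stJ F K c)) c (stY F K c) (stSpec F K c))) :=
      toFun_congr (w (stJ F K c)) (Quotient.mk _
        (pullCanon F ((colimCocone K).ι.app (stJ F K c)) c (stY F K c) (stSpec F K c)))
    exact h1.trans h2

/-- `∀(F)` preserves filtered colimits. -/
lemma gPreservesFiltered : PreservesFilteredColimits (Gfun F) := by
  constructor
  intro J' _ _
  constructor
  intro K
  exact preservesColimit_of_preserves_colimit_cocone (colimIsColimit K) (descIsColimit F K)

end GFilt3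

end Stmt6

-- STATEMENT 6
theorem stmt6 {n : ℕ} (F : CohTuple (n + 1) ⥤ CohSpace) (hF : IsNormalFunctor F) :
    ∃ G : CohTuple n ⥤ CohSpace,
      IsNormalFunctor G ∧ ∀ X : CohTuple n, G.obj X = Tr (partialApp F X) := by
  obtain ⟨h1, h2⟩ := hF
  letI : Limits.PreservesFilteredColimits F := h1
  letI : Limits.PreservesLimitsOfShape Limits.WalkingCospan F := h2
  exact ⟨Stmt6.Gfun F, ⟨Stmt6.gPreservesFiltered F, Stmt6.gPreservesLimitsOfShape F⟩,
    fun X => rfl⟩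
end

section
/- A normal functor F : CohI^n → CohI is finite if and only if NF(F) is a finite set. -/
open CategoryTheory Limits

-- auxiliary development
-- restriction of a coherence space to a subset of its web
def CohSpace.restrict (X : CohSpace) (s : Set X.web) : CohSpace where
  web := s
  coh a b := X.coh a.1 b.1
  refl a := X.refl a.1
  symm h := X.symm h

def CohSpace.inclEmb (X : CohSpace) (s : Set X.web) : X.restrict s ⟶ X :=
  ⟨Subtype.val, Subtype.val_injective, fun _ _ => Iff.rfl⟩

def restrictT {n : ℕ} (X : CohTuple n) (S : ∀ i, Set (X i).web) : CohTuple n :=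
  fun i => (X i).restrict (S i)

def inclT {n : ℕ} (X : CohTuple n) (S : ∀ i, Set (X i).web) : restrictT X S ⟶ X :=
  fun i => (X i).inclEmb (S i)

-- inverse of a surjective embedding
noncomputable def CohEmb.invOfSurj {A B : CohSpace} (f : A ⟶ B)
    (hs : Function.Surjective f.toFun) : B ⟶ A where
  toFun := (Equiv.ofBijective f.toFun ⟨f.inj, hs⟩).symm
  inj := (Equiv.ofBijective f.toFun ⟨f.inj, hs⟩).symm.injective
  coh_iff x x' := by
    have h := f.coh_iff ((Equiv.ofBijective f.toFun ⟨f.inj, hs⟩).symm x)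
      ((Equiv.ofBijective f.toFun ⟨f.inj, hs⟩).symm x')
    have e1 : f.toFun ((Equiv.ofBijective f.toFun ⟨f.inj, hs⟩).symm x) = x :=
      (Equiv.ofBijective f.toFun ⟨f.inj, hs⟩).apply_symm_apply x
    have e2 : f.toFun ((Equiv.ofBijective f.toFun ⟨f.inj, hs⟩).symm x') = x' :=
      (Equiv.ofBijective f.toFun ⟨f.inj, hs⟩).apply_symm_apply x'
    rw [e1, e2] at h
    exact h.symm

lemma CohEmb.comp_invOfSurj {A B : CohSpace} (f : A ⟶ B) (hs : Function.Surjective f.toFun) :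
    f ≫ CohEmb.invOfSurj f hs = 𝟙 A := by
  apply CohEmb.ext
  funext a
  exact (Equiv.ofBijective f.toFun ⟨f.inj, hs⟩).symm_apply_apply a

lemma CohEmb.invOfSurj_comp {A B : CohSpace} (f : A ⟶ B) (hs : Function.Surjective f.toFun) :
    CohEmb.invOfSurj f hs ≫ f = 𝟙 B := by
  apply CohEmb.ext
  funext a
  exact (Equiv.ofBijective f.toFun ⟨f.inj, hs⟩).apply_symm_apply a

-- tuple version
noncomputable def tupleInv {n : ℕ} {A B : CohTuple n} (u : A ⟶ B)
    (hs : ∀ i, Function.Surjective (u i).toFun) : B ⟶ A :=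
  fun i => CohEmb.invOfSurj (u i) (hs i)

lemma tupleInv_left {n : ℕ} {A B : CohTuple n} (u : A ⟶ B)
    (hs : ∀ i, Function.Surjective (u i).toFun) : u ≫ tupleInv u hs = 𝟙 A := by
  funext i
  exact CohEmb.comp_invOfSurj (u i) (hs i)

lemma tupleInv_right {n : ℕ} {A B : CohTuple n} (u : A ⟶ B)
    (hs : ∀ i, Function.Surjective (u i).toFun) : tupleInv u hs ≫ u = 𝟙 B := by
  funext i
  exact CohEmb.invOfSurj_comp (u i) (hs i)
-- map of F applied to a composite, on webs
lemma map_comp_apply {n : ℕ} (F : CohTuple n ⥤ CohSpace) {A B C : CohTuple n}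
    (f : A ⟶ B) (g : B ⟶ C) (a : (F.obj A).web) :
    (F.map (f ≫ g)).toFun a = (F.map g).toFun ((F.map f).toFun a) := by
  rw [F.map_comp]; rfl

lemma map_id_apply {n : ℕ} (F : CohTuple n ⥤ CohSpace) {A : CohTuple n} (a : (F.obj A).web) :
    (F.map (𝟙 A)).toFun a = a := by
  rw [F.map_id]; rfl

/-- Core lemma: below every element carried by a tuple with finite webs there is a
normal form. -/
lemma exists_nf {n : ℕ} (F : CohTuple n ⥤ CohSpace) (X : CohTuple n)
    (hX : ∀ i, Finite (X i).web) (x : (F.obj X).web) :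
    ∃ e : Elts F, IsNormalForm e ∧ ∃ v : e.1 ⟶ X, (F.map v).toFun e.2 = x := by
  classical
  haveI := hX
  haveI : ∀ i, Fintype (X i).web := fun i => Fintype.ofFinite _
  set Adm : (∀ i, Finset (X i).web) → Prop :=
    fun S => ∃ x', (F.map (inclT X (fun i => ↑(S i)))).toFun x' = x with hAdmdef
  have hTot : ∀ {A B : CohTuple n} (u : A ⟶ B), (∀ i, Function.Surjective (u i).toFun) →
      Function.Surjective (F.map u).toFun := by
    intro A B u hs b
    refine ⟨(F.map (tupleInv u hs)).toFun b, ?_⟩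
    rw [← map_comp_apply, tupleInv_right, map_id_apply]
  -- the full tuple is admissible
  have hUnivAdm : Adm (fun i => Finset.univ) := by
    have hs : ∀ i, Function.Surjective ((inclT X (fun i => ↑(Finset.univ : Finset (X i).web))) i).toFun := by
      intro i b
      exact ⟨⟨b, by simp⟩, rfl⟩
    obtain ⟨x', hx'⟩ := hTot (inclT X _) hs x
    exact ⟨x', hx'⟩
  -- minimize total cardinality
  set tot : (∀ i, Finset (X i).web) → ℕ := fun S => ∑ i, (S i).card with htotdef
  have hex : ∃ k, ∃ S, Adm S ∧ tot S = k := ⟨_, _, hUnivAdm, rfl⟩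
  obtain ⟨S₀, hS₀, hcard⟩ := Nat.find_spec hex
  have hmin : ∀ S, Adm S → Nat.find hex ≤ tot S := fun S hS => Nat.find_min' hex ⟨S, hS, rfl⟩
  obtain ⟨x₀, hx₀⟩ := hS₀
  refine ⟨⟨restrictT X (fun i => ↑(S₀ i)), x₀⟩, ⟨?_, ?_⟩, inclT X _, hx₀⟩
  · intro i
    show Finite (↑(S₀ i) : Set (X i).web)
    exact (S₀ i).finite_toSet.to_subtype
  rintro ⟨Y, y⟩ u
  have hu2 : (F.map u.1).toFun y = x₀ := u.2
  -- Y has finite webs since it embeds into a finite tuple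
  haveI : ∀ i, Finite (Y i).web := fun i =>
    @Finite.of_injective _ _ ((S₀ i).finite_toSet.to_subtype) (u.1 i).toFun (u.1 i).inj
  haveI : ∀ i, Fintype (Y i).web := fun i => Fintype.ofFinite _
  set T : ∀ i, Finset (X i).web := fun i =>
    Finset.image (fun a => ((u.1 i).toFun a).val) Finset.univ with hTdef
  have hTsub : ∀ i, T i ⊆ S₀ i := by
    intro i b hb
    rw [hTdef] at hb
    simp only [Finset.mem_image, Finset.mem_univ, true_and] at hb
    obtain ⟨a, rfl⟩ := hb
    exact ((u.1 i).toFun a).2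
  -- the comparison embedding into the restriction to T
  have hmem : ∀ i (a : (Y i).web), ((u.1 i).toFun a).val ∈ (↑(T i) : Set (X i).web) := by
    intro i a
    rw [hTdef]
    simp
  set q : Y ⟶ restrictT X (fun i => ↑(T i)) := fun i =>
    { toFun := fun a => ⟨((u.1 i).toFun a).val, hmem i a⟩
      inj := by
        intro a b h
        apply (u.1 i).inj
        have h' := congrArg Subtype.val h
        exact Subtype.ext h'
      coh_iff := fun a b => (u.1 i).coh_iff a b } with hqdef
  -- T is admissible
  have hcompeq : q ≫ inclT X (fun i => ↑(T i)) = u.1 ≫ inclT X (fun i => ↑(S₀ i)) := by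
    funext i
    apply CohEmb.ext
    rfl
  have hTAdm : Adm T := by
    refine ⟨(F.map q).toFun y, ?_⟩
    rw [← map_comp_apply F q (inclT X _) y, hcompeq, map_comp_apply F u.1 (inclT X _) y, hu2]
    exact hx₀
  -- cardinality forces T = S₀
  have hle : tot T ≤ tot S₀ := Finset.sum_le_sum (fun i _ => Finset.card_le_card (hTsub i))
  have hge : tot S₀ ≤ tot T := hcard ▸ hmin T hTAdm
  have hT_eq : ∀ i, T i = S₀ i := by
    have hsum : ∑ i, (T i).card = ∑ i, (S₀ i).card := le_antisymm hle hge
    have := (Finset.sum_eq_sum_iff_of_le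
      (fun i _ => Finset.card_le_card (hTsub i))).mp hsum
    intro i
    exact Finset.eq_of_subset_of_card_le (hTsub i) (le_of_eq (this i (Finset.mem_univ i)).symm)
  -- u is componentwise surjective, hence invertible
  have husurj : ∀ i, Function.Surjective (u.1 i).toFun := by
    intro i b
    have hbT : b.val ∈ T i := by
      rw [hT_eq i]
      exact b.2
    rw [hTdef] at hbT
    simp only [Finset.mem_image, Finset.mem_univ, true_and] at hbT
    obtain ⟨a, ha⟩ := hbT
    exact ⟨a, Subtype.ext ha⟩
  set v : restrictT X (fun i => ↑(S₀ i)) ⟶ Y := tupleInv u.1 husurj with hvdef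
  have hvu : v ≫ u.1 = 𝟙 _ := tupleInv_right u.1 husurj
  have huv : u.1 ≫ v = 𝟙 Y := tupleInv_left u.1 husurj
  have hvx : (F.map v).toFun x₀ = y := by
    rw [← hu2, ← map_comp_apply F u.1 v y, huv, map_id_apply F y]
  refine ⟨⟨v, hvx⟩, Subtype.ext hvu, ?_⟩
  -- uniqueness
  rintro ⟨w, hw⟩ hweq
  apply Subtype.ext
  show w = v
  funext i
  apply CohEmb.ext
  funext a
  apply (u.1 i).inj
  have h1 : w ≫ u.1 = 𝟙 _ := congrArg Subtype.val hweq
  have e1 : (u.1 i).toFun ((w i).toFun a) = a := by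
    have := congrFun (congrArg CohEmb.toFun (congrFun h1 i)) a
    exact this
  have e2 : (u.1 i).toFun ((v i).toFun a) = a := by
    have := congrFun (congrArg CohEmb.toFun (congrFun hvu i)) a
    exact this
  rw [e1, e2]

-- equivalences of webs from isos in Elts
noncomputable def eltsIsoEquiv {n : ℕ} {F : CohTuple n ⥤ CohSpace} {e e' : Elts F}
    (ψ : e ≅ e') (i : Fin n) : (e.1 i).web ≃ (e'.1 i).web where
  toFun := (ψ.hom.1 i).toFun
  invFun := (ψ.inv.1 i).toFun
  left_inv a := by
    have h : ψ.hom.1 ≫ ψ.inv.1 = 𝟙 e.1 := congrArg Subtype.val ψ.hom_inv_id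
    exact congrFun (congrArg CohEmb.toFun (congrFun h i)) a
  right_inv a := by
    have h : ψ.inv.1 ≫ ψ.hom.1 = 𝟙 e'.1 := congrArg Subtype.val ψ.inv_hom_id
    exact congrFun (congrArg CohEmb.toFun (congrFun h i)) a

noncomputable def eltsIsoOfSurj {n : ℕ} {F : CohTuple n ⥤ CohSpace} {A B : CohTuple n}
    (u : A ⟶ B) (hs : ∀ i, Function.Surjective (u i).toFun) (a : (F.obj A).web) :
    (Functor.elementsMk (F ⋙ webF) A a) ≅ Functor.elementsMk (F ⋙ webF) B ((F.map u).toFun a) where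
  hom := ⟨u, rfl⟩
  inv := ⟨tupleInv u hs, by
    show (F.map (tupleInv u hs)).toFun ((F.map u).toFun a) = a
    rw [← map_comp_apply, tupleInv_left, map_id_apply]⟩
  hom_inv_id := Subtype.ext (tupleInv_left u hs)
  inv_hom_id := Subtype.ext (tupleInv_right u hs)

-- canonical presentation of a finite tuple
noncomputable def canonData {n : ℕ} (A : CohTuple n) (hA : ∀ i, Finite (A i).web) :
    Fin n → FinCohData := fun i =>
  letI := hA i
  { k := Nat.card (A i).web
    r := fun p q => (A i).coh ((Finite.equivFin (A i).web).symm p)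
      ((Finite.equivFin (A i).web).symm q)
    refl := fun p => (A i).refl _
    symm := fun h => (A i).symm h }

noncomputable def canonEmb {n : ℕ} (A : CohTuple n) (hA : ∀ i, Finite (A i).web) :
    A ⟶ canonTuple (canonData A hA) := fun i =>
  letI := hA i
  { toFun := Finite.equivFin (A i).web
    inj := (Finite.equivFin (A i).web).injective
    coh_iff := fun a b => by
      show (A i).coh a b ↔ (A i).coh _ _
      rw [Equiv.symm_apply_apply, Equiv.symm_apply_apply] }

lemma canonEmb_surj {n : ℕ} (A : CohTuple n) (hA : ∀ i, Finite (A i).web) (i : Fin n) :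
    Function.Surjective ((canonEmb A hA) i).toFun := by
  intro b
  letI := hA i
  exact ⟨(Finite.equivFin (A i).web).symm b, (Finite.equivFin (A i).web).apply_symm_apply b⟩

lemma canonData_k {n : ℕ} (A : CohTuple n) (hA : ∀ i, Finite (A i).web) (i : Fin n) :
    (canonData A hA i).k = Nat.card (A i).web := rfl

-- finiteness of bounded FinCohData
lemma finite_boundedFCD (K : ℕ) : Finite {d : FinCohData // d.k ≤ K} := by
  have : Finite (Σ k : Fin (K + 1), (Fin k → Fin k → Prop)) := by infer_instance
  refine Finite.of_injective
    (fun d => (⟨⟨d.1.k, Nat.lt_succ_of_le d.2⟩, fun p q => d.1.r p q⟩ :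
      Σ k : Fin (K + 1), (Fin k → Fin k → Prop))) ?_
  rintro ⟨⟨k, r, hr, hs⟩, hk⟩ ⟨⟨k', r', hr', hs'⟩, hk'⟩ h
  obtain ⟨h1, h2⟩ := Sigma.mk.inj_iff.mp h
  have hkk : k = k' := congrArg Fin.val h1
  subst hkk
  have hrr : r = r' := eq_of_heq h2
  subst hrr
  rfl

lemma finite_cohEmb (A B : CohSpace) (hA : Finite A.web) (hB : Finite B.web) :
    Finite (CohEmb A B) := by
  refine Finite.of_injective (fun f => f.toFun) ?_
  intro f g h
  exact CohEmb.ext h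

lemma out_iso {n : ℕ} {F : CohTuple n ⥤ CohSpace} (e : Elts F) :
    Nonempty ((Quotient.mk (isIsomorphicSetoid (Elts F)) e).out ≅ e) := by
  have h0 : Quotient.mk (isIsomorphicSetoid (Elts F))
      ((Quotient.mk (isIsomorphicSetoid (Elts F)) e).out) =
      Quotient.mk (isIsomorphicSetoid (Elts F)) e := Quotient.out_eq _
  exact Quotient.exact h0

-- ===== part 3 : the two directions =====

lemma nf_card_le {n : ℕ} (F : CohTuple n ⥤ CohSpace) (hd : degree F < ⊤)
    (e : Elts F) (he : IsNormalForm e) (i : Fin n) :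
    Nat.card (e.1 i).web ≤ (degree F).toNat := by
  have h1 : (Nat.card (e.1 i).web : ℕ∞) ≤ degree F := by
    refine le_trans (le_iSup (fun i : Fin n => (Nat.card (e.1 i).web : ℕ∞)) i) ?_
    refine le_trans (le_iSup (fun _ : IsNormalForm e =>
      ⨆ i : Fin n, (Nat.card (e.1 i).web : ℕ∞)) he) ?_
    exact le_iSup (fun e : Elts F => ⨆ (_ : IsNormalForm e) (i : Fin n),
      (Nat.card (e.1 i).web : ℕ∞)) e
  rw [← ENat.coe_toNat hd.ne] at h1
  exact_mod_cast h1

lemma forward_dir {n : ℕ} (F : CohTuple n ⥤ CohSpace) (hFin : IsFiniteFunctor F) :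
    (NFSet F).Finite := by
  classical
  set K := (degree F).toNat with hK
  -- target finite type
  letI I := {d : Fin n → FinCohData // ∀ i, (d i).k ≤ K}
  haveI : Finite {d : FinCohData // d.k ≤ K} := finite_boundedFCD K
  haveI hI : Finite I := by
    refine Finite.of_injective
      (fun d => (fun i => ⟨d.1 i, d.2 i⟩ : ∀ _ : Fin n, {d : FinCohData // d.k ≤ K})) ?_
    intro d d' h
    apply Subtype.ext
    funext i
    exact congrArg Subtype.val (congrFun h i)
  letI T := Σ d : I, (F.obj (canonTuple d.1)).web
  haveI hTfin : Finite T := by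
    haveI : ∀ d : I, Finite (F.obj (canonTuple d.1)).web := fun d =>
      hFin.1 (canonTuple d.1) (fun i => inferInstanceAs (Finite (Fin (d.1 i).k)))
    infer_instance
  -- each class in NFSet has a canonical representative
  have hrep : ∀ q : ↥(NFSet F), ∃ t : T,
      Quotient.mk (isIsomorphicSetoid (Elts F))
        (Functor.elementsMk (F ⋙ webF) (canonTuple t.1.1) t.2) = q.1 := by
    rintro ⟨q, e, he, rfl⟩
    have hA := he.1
    have hbound : ∀ i, (canonData e.1 hA i).k ≤ K :=
      fun i => nf_card_le F hFin.2 e he i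
    have hs := canonEmb_surj e.1 hA
    refine ⟨⟨⟨canonData e.1 hA, hbound⟩, (F.map (canonEmb e.1 hA)).toFun e.2⟩, ?_⟩
    apply Quotient.sound
    exact ⟨(eltsIsoOfSurj (canonEmb e.1 hA) hs e.2).symm⟩
  rw [← Set.finite_coe_iff]
  have hinj : Function.Injective (fun q : ↥(NFSet F) => Classical.choose (hrep q)) := by
    intro q q' h
    have h' : Classical.choose (hrep q) = Classical.choose (hrep q') := h
    apply Subtype.ext
    rw [← Classical.choose_spec (hrep q), ← Classical.choose_spec (hrep q'), h']
  exact Finite.of_injective _ hinj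

lemma converse_dir {n : ℕ} (F : CohTuple n ⥤ CohSpace) (hNF : (NFSet F).Finite) :
    IsFiniteFunctor F := by
  classical
  haveI := hNF.to_subtype
  -- representatives of NFSet classes are isomorphic to normal forms
  have hrepiso : ∀ q : ↥(NFSet F), ∃ e : Elts F, IsNormalForm e ∧
      Nonempty (Quotient.out q.1 ≅ e) := by
    rintro ⟨q, e, he, rfl⟩
    exact ⟨e, he, out_iso e⟩
  constructor
  · -- preserves finite webs
    intro X hX
    have repfin : ∀ q : ↥(NFSet F), ∀ i, Finite ((Quotient.out q.1).1 i).web := by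
      intro q i
      obtain ⟨e, he, ⟨ψ⟩⟩ := hrepiso q
      haveI := he.1 i
      exact Finite.of_injective (eltsIsoEquiv ψ i) (eltsIsoEquiv ψ i).injective
    have claim : ∀ x : (F.obj X).web,
        ∃ p : (Σ q : ↥(NFSet F), ((Quotient.out q.1).1 ⟶ X)),
          (F.map p.2).toFun (Quotient.out p.1.1).2 = x := by
      intro x
      obtain ⟨e, he, v, hv⟩ := exists_nf F X hX x
      have hq : Quotient.mk (isIsomorphicSetoid (Elts F)) e ∈ NFSet F := ⟨e, he, rfl⟩
      obtain ⟨ψ⟩ := out_iso e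
      refine ⟨⟨⟨_, hq⟩, ψ.hom.1 ≫ v⟩, ?_⟩
      show (F.map (ψ.hom.1 ≫ v)).toFun _ = x
      rw [map_comp_apply F ψ.hom.1 v (Quotient.out (Quotient.mk (isIsomorphicSetoid (Elts F)) e)).2]
      have h2 : (F.map ψ.hom.1).toFun
          (Quotient.out (Quotient.mk (isIsomorphicSetoid (Elts F)) e)).2 = e.2 := ψ.hom.2
      rw [h2, hv]
    haveI hhom : ∀ q : ↥(NFSet F), Finite ((Quotient.out q.1).1 ⟶ X) := by
      intro q
      haveI : ∀ i, Finite (CohEmb ((Quotient.out q.1).1 i) (X i)) :=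
        fun i => finite_cohEmb _ _ (repfin q i) (hX i)
      exact inferInstanceAs (Finite (∀ i, CohEmb ((Quotient.out q.1).1 i) (X i)))
    have hinj : Function.Injective (fun x : (F.obj X).web => Classical.choose (claim x)) := by
      intro x y h
      have h' : Classical.choose (claim x) = Classical.choose (claim y) := h
      rw [← Classical.choose_spec (claim x), ← Classical.choose_spec (claim y), h']
    exact Finite.of_injective _ hinj
  · -- bounded degree
    set N : ℕ := hNF.toFinset.sup
      (fun q => Finset.univ.sup (fun i => Nat.card ((Quotient.out q).1 i).web)) with hN
    have hdeg : degree F ≤ (N : ℕ∞) := by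
      refine iSup_le fun e => iSup_le fun he => iSup_le fun i => ?_
      have hq : Quotient.mk (isIsomorphicSetoid (Elts F)) e ∈ NFSet F := ⟨e, he, rfl⟩
      obtain ⟨ψ⟩ := out_iso e
      have hcard : Nat.card (e.1 i).web =
          Nat.card ((Quotient.out (Quotient.mk (isIsomorphicSetoid (Elts F)) e)).1 i).web :=
        Nat.card_congr (eltsIsoEquiv ψ i).symm
      have h1 : Nat.card (e.1 i).web ≤ N := by
        rw [hcard]
        refine le_trans (Finset.le_sup
          (f := fun j => Nat.card
            ((Quotient.out (Quotient.mk (isIsomorphicSetoid (Elts F)) e)).1 j).web)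
          (Finset.mem_univ i)) ?_
        exact Finset.le_sup
          (f := fun q => Finset.univ.sup (fun j => Nat.card ((Quotient.out q).1 j).web))
          (hNF.mem_toFinset.mpr hq)
      exact_mod_cast h1
    exact lt_of_le_of_lt hdeg (WithTop.coe_lt_top N)

-- STATEMENT 7
theorem stmt7 {n : ℕ} (F : CohTuple n ⥤ CohSpace) (hF : IsNormalFunctor F) :
    IsFiniteFunctor F ↔ (NFSet F).Finite := by
  exact Iff.intro (forward_dir F) (converse_dir F)
end

section
/- For any normal functor F : CohI^{n+1} → CohI, deg(∀(F)) ≤ deg(F). -/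
open CategoryTheory Limits

section Aux

open Function

lemma CohEmb.toFun_eqToHom {X Y : CohSpace} (h : X = Y) :
    (eqToHom h).toFun = cast (congrArg CohSpace.web h) := by subst h; rfl

lemma surj_of_comp_eqToHom {A B C : CohSpace} (f : A ⟶ B) (h : B = C)
    (hs : Function.Surjective (f ≫ eqToHom h).toFun) : Function.Surjective f.toFun := by
  subst h; simpa using hs

lemma retraction_unique {m : ℕ} {H : CohTuple m ⥤ CohSpace} {e f : Elts H} (u : f ⟶ e)
    {v v' : e ⟶ f} (hv : v ≫ u = 𝟙 e) (hv' : v' ≫ u = 𝟙 e) : v = v' := by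
  apply Subtype.ext
  funext j
  apply CohEmb.ext
  funext z
  apply (u.1 j).inj
  have h1 := congrArg (fun t : e ⟶ e => (t.1 j).toFun z) hv
  have h2 := congrArg (fun t : e ⟶ e => (t.1 j).toFun z) hv'
  exact h1.trans h2.symm

lemma retraction_surj {m : ℕ} {H : CohTuple m ⥤ CohSpace} {e f : Elts H} (u : f ⟶ e)
    (v : e ⟶ f) (hv : v ≫ u = 𝟙 e) (j : Fin m) : Function.Surjective (u.1 j).toFun :=
  fun z => ⟨(v.1 j).toFun z, congrArg (fun t : e ⟶ e => (t.1 j).toFun z) hv⟩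

lemma retraction_exists {m : ℕ} {H : CohTuple m ⥤ CohSpace} {e f : Elts H} (u : f ⟶ e)
    (hs : ∀ j, Function.Surjective (u.1 j).toFun) : ∃! v : e ⟶ f, v ≫ u = 𝟙 e := by
  have hb : ∀ j, Function.Bijective (u.1 j).toFun := fun j => ⟨(u.1 j).inj, hs j⟩
  let E : ∀ j, (f.1 j).web ≃ (e.1 j).web := fun j => Equiv.ofBijective _ (hb j)
  let v0 : e.1 ⟶ f.1 := fun j =>
    { toFun := (E j).symm
      inj := (E j).symm.injective
      coh_iff := fun a b => by
        have h := (u.1 j).coh_iff ((E j).symm a) ((E j).symm b)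
        have ha : (u.1 j).toFun ((E j).symm a) = a := (E j).apply_symm_apply a
        have hb' : (u.1 j).toFun ((E j).symm b) = b := (E j).apply_symm_apply b
        rw [ha, hb'] at h
        exact h.symm }
  have hcomp : v0 ≫ u.1 = 𝟙 e.1 := by
    funext j
    apply CohEmb.ext
    funext a
    exact (E j).apply_symm_apply a
  have hel : (H ⋙ webF).map v0 e.2 = f.2 := by
    apply (H.map u.1).inj
    have h2 : (H.map u.1).toFun ((H.map v0).toFun e.2) = (H.map (v0 ≫ u.1)).toFun e.2 := by
      rw [H.map_comp]; rfl
    show (H.map u.1).toFun ((H.map v0).toFun e.2) = (H.map u.1).toFun f.2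
    rw [h2, hcomp, H.map_id]
    exact u.2.symm
  refine ⟨⟨v0, hel⟩, Subtype.ext hcomp, fun v' hv' => retraction_unique u hv' (Subtype.ext hcomp)⟩

end Aux
section Aux2

lemma gfam_lt {n : ℕ} (X : CohTuple n) {j : Fin (n + 1)} (h : (j : ℕ) < n) :
    gfam X j = (Functor.const (CohTuple 1)).obj (X ⟨j, h⟩) := dif_pos h

lemma gfam_ge {n : ℕ} (X : CohTuple n) {j : Fin (n + 1)} (h : ¬ (j : ℕ) < n) :
    gfam X j = Pi.eval (fun _ : Fin 1 => CohSpace) 0 := dif_neg h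

lemma extT_lt {n : ℕ} (X : CohTuple n) (Z : CohTuple 1) {j : Fin (n + 1)} (h : (j : ℕ) < n) :
    (Functor.pi' (gfam X)).obj Z j = X ⟨j, h⟩ := by
  show (gfam X j).obj Z = _
  rw [gfam_lt X h]
  rfl

lemma extT_ge {n : ℕ} (X : CohTuple n) (Z : CohTuple 1) {j : Fin (n + 1)} (h : ¬ (j : ℕ) < n) :
    (Functor.pi' (gfam X)).obj Z j = Z 0 := by
  show (gfam X j).obj Z = _
  rw [gfam_ge X h]
  rfl

lemma piMap_lt {n : ℕ} (X : CohTuple n) {Z Z' : CohTuple 1} (ζ : Z ⟶ Z') {j : Fin (n + 1)}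
    (h : (j : ℕ) < n) :
    (Functor.pi' (gfam X)).map ζ j = eqToHom (extT_lt X Z h) ≫ eqToHom (extT_lt X Z' h).symm := by
  show (gfam X j).map ζ = _
  rw [Functor.congr_hom (gfam_lt X h) ζ]
  simp
  rfl

lemma piMap_ge {n : ℕ} (X : CohTuple n) {Z Z' : CohTuple 1} (ζ : Z ⟶ Z') {j : Fin (n + 1)}
    (h : ¬ (j : ℕ) < n) :
    (Functor.pi' (gfam X)).map ζ j
      = eqToHom (extT_ge X Z h) ≫ ζ 0 ≫ eqToHom (extT_ge X Z' h).symm := by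
  show (gfam X j).map ζ = _
  rw [Functor.congr_hom (gfam_ge X h) ζ]
  rfl

lemma extHom_lt {n : ℕ} {X Y : CohTuple n} (ι : X ⟶ Y) (Z : CohTuple 1) {j : Fin (n + 1)}
    (h : (j : ℕ) < n) :
    extHom ι Z j = eqToHom (extT_lt X Z h) ≫ ι ⟨j, h⟩ ≫ eqToHom (extT_lt Y Z h).symm := by
  apply (conj_eqToHom_iff_heq _ _ (extT_lt X Z h) (extT_lt Y Z h)).2
  unfold extHom
  rw [dif_pos h]
  rw [eq_mpr_eq_cast]; exact cast_heq _ _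

lemma extHom_ge {n : ℕ} {X Y : CohTuple n} (ι : X ⟶ Y) (Z : CohTuple 1) {j : Fin (n + 1)}
    (h : ¬ (j : ℕ) < n) :
    extHom ι Z j = eqToHom (extT_ge X Z h) ≫ eqToHom (extT_ge Y Z h).symm := by
  have h1 : extHom ι Z j = eqToHom (extT_ge X Z h) ≫ 𝟙 (Z 0) ≫ eqToHom (extT_ge Y Z h).symm := by
    apply (conj_eqToHom_iff_heq _ _ (extT_ge X Z h) (extT_ge Y Z h)).2
    unfold extHom
    rw [dif_neg h]
    rw [eq_mpr_eq_cast]; exact cast_heq _ _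
  simpa using h1

lemma eqToHom_aux1 {C : Type*} [Category C] {P Q R S T U V W : C} (a : P = Q) (b : Q = R)
    (c : R = S) (f : S ⟶ T) (d : T = U) (e : P = S) (f' : T = V) (g : V = W) (k : W = U) :
    (eqToHom a ≫ eqToHom b) ≫ eqToHom c ≫ f ≫ eqToHom d
      = (eqToHom e ≫ f ≫ eqToHom f') ≫ eqToHom g ≫ eqToHom k := by
  subst_vars; simp

lemma eqToHom_aux2 {C : Type*} [Category C] {P Q R S T U V W : C} (a : P = Q) (f : Q ⟶ R)
    (b : R = S) (c : S = T) (d : T = U) (e : P = V) (g : V = W) (k : W = Q) (l : R = U) :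
    (eqToHom a ≫ f ≫ eqToHom b) ≫ eqToHom c ≫ eqToHom d
      = (eqToHom e ≫ eqToHom g) ≫ eqToHom k ≫ f ≫ eqToHom l := by
  subst_vars; simp

lemma eqToHom_aux3 {C : Type*} [Category C] {P Q R S U : C} (a : P = Q) (b : Q = R)
    (f : R ⟶ S) (c : S = U) :
    eqToHom a ≫ eqToHom b ≫ f ≫ eqToHom c = eqToHom (a.trans b) ≫ f ≫ eqToHom c := by
  subst_vars; simp

lemma eqToHom_aux4 {C : Type*} [Category C] {P Q R S : C} (f : P ⟶ Q) (a : Q = R) (b : R = S)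
    (c : S = Q) :
    (f ≫ eqToHom a) ≫ eqToHom b ≫ eqToHom c = f := by
  subst_vars; simp

lemma extNat {n : ℕ} {X Y : CohTuple n} (ι : X ⟶ Y) {Z Z' : CohTuple 1} (ζ : Z ⟶ Z') :
    (Functor.pi' (gfam X)).map ζ ≫ extHomPi ι Z' = extHomPi ι Z ≫ (Functor.pi' (gfam Y)).map ζ := by
  funext j
  show (Functor.pi' (gfam X)).map ζ j ≫ extHom ι Z' j = extHom ι Z j ≫ (Functor.pi' (gfam Y)).map ζ j
  by_cases h : (j : ℕ) < n
  · rw [piMap_lt X ζ h, extHom_lt ι Z' h, extHom_lt ι Z h, piMap_lt Y ζ h]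
    exact eqToHom_aux1 (C := CohSpace) _ _ _ _ _ _ _ _ _
  · rw [piMap_ge X ζ h, extHom_ge ι Z' h, extHom_ge ι Z h, piMap_ge Y ζ h]
    exact eqToHom_aux2 (C := CohSpace) _ _ _ _ _ _ _ _ _

end Aux2
section Aux3

/-- The one-component tuple consisting of the last component of `Y`. -/
abbrev lastTuple {n : ℕ} (Y : CohTuple (n + 1)) : CohTuple 1 := fun _ => Y (Fin.last n)

/-- The first `n` components of `Y`. -/
abbrev frontTuple {n : ℕ} (Y : CohTuple (n + 1)) : CohTuple n := fun i => Y i.castSucc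

lemma last_not_lt (n : ℕ) : ¬ ((Fin.last n : Fin (n + 1)) : ℕ) < n := by simp

lemma castSucc_coe_lt {n : ℕ} (i : Fin n) : ((i.castSucc : Fin (n + 1)) : ℕ) < n := by
  simpa using i.isLt

/-- The morphism `Y_last → Z` extracted from `u : Y ⟶ (X, Z)`. -/
def lastMor {n : ℕ} (X : CohTuple n) {Y : CohTuple (n + 1)} {Z : CohTuple 1}
    (u : Y ⟶ (Functor.pi' (gfam X)).obj Z) : lastTuple Y ⟶ Z := fun k =>
  u (Fin.last n) ≫ eqToHom ((extT_ge X Z (last_not_lt n)).trans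
    (congrArg Z (Subsingleton.elim 0 k)))

/-- The morphism `Y ⟶ (X, Y_last)` extracted from `u : Y ⟶ (X, Z)`. -/
def toLastExt {n : ℕ} (X : CohTuple n) {Y : CohTuple (n + 1)} {Z : CohTuple 1}
    (u : Y ⟶ (Functor.pi' (gfam X)).obj Z) :
    Y ⟶ (Functor.pi' (gfam X)).obj (lastTuple Y) := fun j =>
  if h : (j : ℕ) < n then
    u j ≫ eqToHom ((extT_lt X Z h).trans (extT_lt X (lastTuple Y) h).symm)
  else eqToHom (by rw [extT_ge X (lastTuple Y) h]
                   exact congrArg Y (Fin.ext (by simp only [Fin.val_last]; have := j.isLt; omega)))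

lemma toLastExt_comp {n : ℕ} (X : CohTuple n) {Y : CohTuple (n + 1)} {Z : CohTuple 1}
    (u : Y ⟶ (Functor.pi' (gfam X)).obj Z) :
    toLastExt X u ≫ (Functor.pi' (gfam X)).map (lastMor X u) = u := by
  funext j
  show toLastExt X u j ≫ (Functor.pi' (gfam X)).map (lastMor X u) j = u j
  by_cases h : (j : ℕ) < n
  · rw [piMap_lt X (lastMor X u) h]
    simp only [toLastExt, dif_pos h]
    simp
  · rw [piMap_ge X (lastMor X u) h]
    simp only [toLastExt, dif_neg h]
    have hj : j = Fin.last n := Fin.ext (by simp only [Fin.val_last]; have := j.isLt; omega)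
    subst hj
    simp only [lastMor]
    simp
end Aux3
section Aux4

/-- The morphism `frontTuple Y ⟶ X` extracted from `u : Y ⟶ (X, Z)`. -/
def frontMor {n : ℕ} (X : CohTuple n) {Y : CohTuple (n + 1)} {Z : CohTuple 1}
    (u : Y ⟶ (Functor.pi' (gfam X)).obj Z) : frontTuple Y ⟶ X := fun i =>
  u i.castSucc ≫ eqToHom ((extT_lt X Z (castSucc_coe_lt i)).trans
    (congrArg X (Fin.ext (by simp))))

/-- The morphism `Y ⟶ (frontTuple Y, Z)` extracted from `u : Y ⟶ (X, Z)`. -/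
def toFrontExt {n : ℕ} (X : CohTuple n) {Y : CohTuple (n + 1)} {Z : CohTuple 1}
    (u : Y ⟶ (Functor.pi' (gfam X)).obj Z) :
    Y ⟶ (Functor.pi' (gfam (frontTuple Y))).obj Z := fun j =>
  if h : (j : ℕ) < n then
    eqToHom (((congrArg Y ((Fin.ext (by simp)) : j = Fin.castSucc ⟨(j : ℕ), h⟩)) :
        Y j = Y (Fin.castSucc ⟨(j : ℕ), h⟩)).trans (extT_lt (frontTuple Y) Z h).symm)
  else u j ≫ eqToHom ((extT_ge X Z h).trans (extT_ge (frontTuple Y) Z h).symm)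

lemma toFrontExt_comp {n : ℕ} (X : CohTuple n) {Y : CohTuple (n + 1)} {Z : CohTuple 1}
    (u : Y ⟶ (Functor.pi' (gfam X)).obj Z) :
    toFrontExt X u ≫ extHomPi (frontMor X u) Z = u := by
  funext j
  show toFrontExt X u j ≫ extHom (frontMor X u) Z j = u j
  by_cases h : (j : ℕ) < n
  · rw [extHom_lt (frontMor X u) Z h]
    simp only [toFrontExt, dif_pos h, frontMor]
    simp only [eqToHom_trans_assoc, Category.assoc, eqToHom_trans]
    have hcs : Fin.castSucc (⟨(j : ℕ), h⟩ : Fin n) = j := Fin.ext rfl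
    have hheq : HEq (u (Fin.castSucc ⟨(j : ℕ), h⟩)) (u j) := by rw [hcs]
    refine (eqToHom_aux3 (C := CohSpace) _ _ _ _).trans ?_
    exact ((conj_eqToHom_iff_heq (u j) (u (Fin.castSucc ⟨(j : ℕ), h⟩))
      (congrArg Y hcs.symm) (congrArg (fun t => (Functor.pi' (gfam X)).obj Z t) hcs.symm)).2
      hheq.symm).symm
  · rw [extHom_ge (frontMor X u) Z h]
    simp only [toFrontExt, dif_neg h]
    exact eqToHom_aux4 (C := CohSpace) _ _ _ _

end Aux4
lemma key {n : ℕ} (F : CohTuple (n + 1) ⥤ CohSpace) (G : CohTuple n ⥤ CohSpace)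
    (hobj : ∀ X, G.obj X = Tr (partialApp F X)) (hact : ForallAction F G hobj)
    (e : Elts G) (he : IsNormalForm e) :
    ∃ eF : Elts F, IsNormalForm eF ∧ ∀ i : Fin n, eF.1 i.castSucc = e.1 i := by
  obtain ⟨X, q⟩ := e
  obtain ⟨cX, hc⟩ := Quotient.exists_rep (cast (congrArg CohSpace.web (hobj X)) q)
  obtain ⟨d, x, hx⟩ := cX
  have hqq : trWebCast hobj X
      (Quotient.mk (traceSetoid (partialApp F X)) ⟨d, x, hx⟩) = q := by
    rw [hc]; exact (cast_cast _ _ q).trans (cast_eq _ q)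
  refine ⟨⟨(Functor.pi' (gfam X)).obj (canonTuple d), x⟩, ⟨?_, ?_⟩,
    fun i => (extT_lt X (canonTuple d) (castSucc_coe_lt i)).trans
      (congrArg X (Fin.ext (by simp)))⟩
  · intro j
    show Finite (((Functor.pi' (gfam X)).obj (canonTuple d) j).web)
    by_cases h : (j : ℕ) < n
    · rw [extT_lt X (canonTuple d) h]; exact he.1 ⟨j, h⟩
    · rw [extT_ge X (canonTuple d) h]
      show Finite (Fin (d 0).k)
      infer_instance
  · intro f u
    refine retraction_exists u ?_
    obtain ⟨Y, y⟩ := f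
    intro j
    by_cases h : (j : ℕ) < n
    · -- front components, via initiality of (X, q) in El(|G|)
      have hkeyX : (F.map (extHomPi (frontMor X u.1) (canonTuple d))).toFun
          ((F.map (toFrontExt X u.1)).toFun y) = x := by
        have h1 : (F.map (toFrontExt X u.1 ≫ extHomPi (frontMor X u.1) (canonTuple d))).toFun y
            = (F.map (extHomPi (frontMor X u.1) (canonTuple d))).toFun
              ((F.map (toFrontExt X u.1)).toFun y) := by rw [F.map_comp]; rfl
        rw [← h1, toFrontExt_comp]
        exact u.2
      have hmain : ∀ (Z : CohTuple 1) (θ : canonTuple d ⟶ Z),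
          (F.map (extHomPi (frontMor X u.1) Z)).toFun
            (((partialApp F (frontTuple Y)).map θ).toFun ((F.map (toFrontExt X u.1)).toFun y))
          = ((partialApp F X).map θ).toFun x := by
        intro Z θ
        calc (F.map (extHomPi (frontMor X u.1) Z)).toFun
              (((partialApp F (frontTuple Y)).map θ).toFun ((F.map (toFrontExt X u.1)).toFun y))
            = (F.map ((Functor.pi' (gfam (frontTuple Y))).map θ ≫
                extHomPi (frontMor X u.1) Z)).toFun
                ((F.map (toFrontExt X u.1)).toFun y) := by rw [F.map_comp]; rfl
          _ = (F.map (extHomPi (frontMor X u.1) (canonTuple d) ≫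
                (Functor.pi' (gfam X)).map θ)).toFun
                ((F.map (toFrontExt X u.1)).toFun y) := by rw [extNat]
          _ = (F.map ((Functor.pi' (gfam X)).map θ)).toFun
                ((F.map (extHomPi (frontMor X u.1) (canonTuple d))).toFun
                  ((F.map (toFrontExt X u.1)).toFun y)) := by rw [F.map_comp]; rfl
          _ = (show (F.obj ((Functor.pi' (gfam X)).obj Z)).web from
                ((partialApp F X).map θ).toFun x) := by rw [hkeyX]; rfl
      have hNF' : IsNormalForm (F := partialApp F (frontTuple Y))
          ⟨canonTuple d, (F.map (toFrontExt X u.1)).toFun y⟩ := by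
        constructor
        · intro k
          show Finite (Fin (d k).k)
          infer_instance
        · intro fz mz
          obtain ⟨Z, z⟩ := fz
          have hcond : ((partialApp F X) ⋙ webF).map mz.1
              ((F.map (extHomPi (frontMor X u.1) Z)).toFun z) = x := by
            show (F.map ((Functor.pi' (gfam X)).map mz.1)).toFun
                ((F.map (extHomPi (frontMor X u.1) Z)).toFun z) = x
            calc (F.map ((Functor.pi' (gfam X)).map mz.1)).toFun
                  ((F.map (extHomPi (frontMor X u.1) Z)).toFun z)
                = (F.map (extHomPi (frontMor X u.1) Z ≫
                    (Functor.pi' (gfam X)).map mz.1)).toFun z := by rw [F.map_comp]; rfl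
              _ = (F.map ((Functor.pi' (gfam (frontTuple Y))).map mz.1 ≫
                    extHomPi (frontMor X u.1) (canonTuple d))).toFun z := by rw [extNat]
              _ = (F.map (extHomPi (frontMor X u.1) (canonTuple d))).toFun
                    ((F.map ((Functor.pi' (gfam (frontTuple Y))).map mz.1)).toFun z) := by
                  rw [F.map_comp]; rfl
              _ = (F.map (extHomPi (frontMor X u.1) (canonTuple d))).toFun
                    ((F.map (toFrontExt X u.1)).toFun y) := congrArg _ mz.2
              _ = (show (F.obj ((Functor.pi' (gfam X)).obj (canonTuple d))).web from x) := hkeyX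
          obtain ⟨v, hv, -⟩ := hx.1.2 ⟨Z, (F.map (extHomPi (frontMor X u.1) Z)).toFun z⟩
            ⟨mz.1, hcond⟩
          exact retraction_exists mz (fun k => retraction_surj _ v hv k)
      have hcoh' : NFCoherent (F := partialApp F (frontTuple Y))
          ⟨canonTuple d, (F.map (toFrontExt X u.1)).toFun y⟩
          ⟨canonTuple d, (F.map (toFrontExt X u.1)).toFun y⟩ := by
        intro Z ι κ
        have hthis := hx.2 Z ι κ
        dsimp only at hthis ⊢
        rw [← hmain Z ι, ← hmain Z κ] at hthis
        exact ((F.map (extHomPi (frontMor X u.1) Z)).coh_iff _ _).2 hthis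
      obtain ⟨c'', h1, h2, h3⟩ := hact (frontTuple Y) X (frontMor X u.1)
        ⟨d, (F.map (toFrontExt X u.1)).toFun y, hNF', hcoh'⟩
      obtain ⟨d'', w''⟩ := c''
      have h2' : d = d'' := h2.symm
      subst h2'
      have hw : w''.1 = x := (eq_of_heq h3).trans hkeyX
      have hcc : (⟨d, w''⟩ : CanonNF (partialApp F X)) = ⟨d, x, hx⟩ :=
        congrArg (Sigma.mk d) (Subtype.ext hw)
      have h1'' : (G ⋙ webF).map (frontMor X u.1) (trWebCast hobj (frontTuple Y)
          (Quotient.mk (traceSetoid (partialApp F (frontTuple Y)))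
            ⟨d, (F.map (toFrontExt X u.1)).toFun y, hNF', hcoh'⟩)) = q := by
        refine h1.trans ?_
        rw [hcc]
        exact hqq
      obtain ⟨v, hv, -⟩ := he.2 ⟨frontTuple Y, trWebCast hobj (frontTuple Y)
          (Quotient.mk (traceSetoid (partialApp F (frontTuple Y)))
            ⟨d, (F.map (toFrontExt X u.1)).toFun y, hNF', hcoh'⟩)⟩
        ⟨frontMor X u.1, h1''⟩
      have hs' : Function.Surjective (u.1 (Fin.castSucc ⟨(j : ℕ), h⟩)).toFun :=
        surj_of_comp_eqToHom _ _ (retraction_surj _ v hv ⟨(j : ℕ), h⟩)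
      rw [show Fin.castSucc (⟨(j : ℕ), h⟩ : Fin n) = j from Fin.ext rfl] at hs'
      exact hs'
    · -- last component, via initiality of the canonical normal form
      have hj : j = Fin.last n := Fin.ext (by simp only [Fin.val_last]; have := j.isLt; omega)
      subst hj
      have hcond : ((partialApp F X) ⋙ webF).map (lastMor X u.1)
          ((F.map (toLastExt X u.1)).toFun y) = x := by
        show (F.map ((Functor.pi' (gfam X)).map (lastMor X u.1))).toFun
            ((F.map (toLastExt X u.1)).toFun y) = x
        have h1 : (F.map (toLastExt X u.1 ≫ (Functor.pi' (gfam X)).map (lastMor X u.1))).toFun y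
            = (F.map ((Functor.pi' (gfam X)).map (lastMor X u.1))).toFun
              ((F.map (toLastExt X u.1)).toFun y) := by rw [F.map_comp]; rfl
        rw [← h1, toLastExt_comp]
        exact u.2
      obtain ⟨v, hv, -⟩ := hx.1.2 ⟨lastTuple Y, (F.map (toLastExt X u.1)).toFun y⟩
        ⟨lastMor X u.1, hcond⟩
      exact surj_of_comp_eqToHom _ _ (retraction_surj _ v hv 0)
-- STATEMENT 11
theorem stmt11 {n : ℕ} (F : CohTuple (n + 1) ⥤ CohSpace) (hF : IsNormalFunctor F)
    (G : CohTuple n ⥤ CohSpace) (hG : IsNormalFunctor G)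
    (hobj : ∀ X, G.obj X = Tr (partialApp F X)) (hact : ForallAction F G hobj) :
    degree G ≤ degree F := by
  unfold degree
  refine iSup_le fun e => iSup_le fun he => iSup_le fun i => ?_
  obtain ⟨eF, hNF, hcomp⟩ := key F G hobj hact e he
  calc (Nat.card (e.1 i).web : ℕ∞)
      = Nat.card (eF.1 i.castSucc).web := by rw [hcomp i]
    _ ≤ ⨆ (j : Fin (n + 1)), (Nat.card (eF.1 j).web : ℕ∞) := le_iSup
        (fun j => (Nat.card (eF.1 j).web : ℕ∞)) i.castSucc
    _ ≤ ⨆ (e' : Elts F) (_ : IsNormalForm e') (j : Fin (n + 1)),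
          (Nat.card (e'.1 j).web : ℕ∞) :=
        le_iSup_of_le eF (le_iSup_of_le hNF le_rfl)
end
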